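/- arXiv:1305.4990 — 5 statements merged into one kernel-verified Lean document; each statement's English description precedes it below -/
import Mathlib

section
/- Let A1, A2, A3 ∈ 𝔹 be pairwise distinct and not collinear in ℝⁿ. Define m1 = (γ12 + γ13 − γ23 − 1)(γ23 − 1), m2 = (γ12 − γ13 + γ23 − 1)(γ13 − 1), m3 = (−γ12 + γ13 + γ23 − 1)(γ12 − 1), assume D := m1·γ_{A1} + m2·γ_{A2} + m3·γ_{A3} ≠ 0, and assume that the point O = (m1·γ_{A1}·A1 + m2·γ_{A2}·A2 + m3·γ_{A3}·A3)/D lies in 𝔹. Then O is equigyrodistant from the three vertices: ‖⊖A1 ⊕ O‖ = ‖⊖A2 ⊕ O‖ = ‖⊖A3 ⊕ O‖; that is, O is a circumgyrocenter of gyrotriangle A1A2A3. -/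
open RealInnerProductSpace

/-- Lorentz gamma factor of a vector `v` in the `s`-ball of `ℝⁿ`. -/
noncomputable def egamma {n : ℕ} (s : ℝ) (v : EuclideanSpace ℝ (Fin n)) : ℝ :=
  1 / Real.sqrt (1 - ‖v‖ ^ 2 / s ^ 2)

/-- Einstein addition on the `s`-ball of `ℝⁿ`. -/
noncomputable def eadd {n : ℕ} (s : ℝ) (u v : EuclideanSpace ℝ (Fin n)) :
    EuclideanSpace ℝ (Fin n) :=
  (1 / (1 + ⟪u, v⟫ / s ^ 2)) •
    (u + (1 / egamma s u) • v + (egamma s u / (s ^ 2 * (1 + egamma s u))) • ⟪u, v⟫ • u)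

/-- Gyroangle at vertex `X` between points `Y` and `Z`. -/
noncomputable def gyroangle {n : ℕ} (s : ℝ) (X Y Z : EuclideanSpace ℝ (Fin n)) : ℝ :=
  Real.arccos ⟪‖eadd s (-X) Y‖⁻¹ • eadd s (-X) Y, ‖eadd s (-X) Z‖⁻¹ • eadd s (-X) Z⟫

/-- Gamma factor of a real gyrodistance `d`. -/
noncomputable def gammaR (s d : ℝ) : ℝ := 1 / Real.sqrt (1 - d ^ 2 / s ^ 2)

lemma ball_pos' {n : ℕ} {s : ℝ} {v : EuclideanSpace ℝ (Fin n)} (hs : 0 < s) (hv : ‖v‖ < s) :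
    0 < 1 - ‖v‖ ^ 2 / s ^ 2 := by
  rw [sub_pos, div_lt_one (by positivity)]
  nlinarith [norm_nonneg v]

lemma egamma_pos' {n : ℕ} {s : ℝ} {v : EuclideanSpace ℝ (Fin n)} (hs : 0 < s) (hv : ‖v‖ < s) :
    0 < egamma s v := by
  unfold egamma
  have := ball_pos' hs hv
  positivity

lemma egamma_sq' {n : ℕ} {s : ℝ} {v : EuclideanSpace ℝ (Fin n)} (hs : 0 < s) (hv : ‖v‖ < s) :
    (egamma s v) ^ 2 * (1 - ‖v‖ ^ 2 / s ^ 2) = 1 := by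
  have h := ball_pos' hs hv
  unfold egamma
  rw [div_pow, one_pow, Real.sq_sqrt h.le]
  have h2 : 0 < s ^ 2 - ‖v‖ ^ 2 := by
    nlinarith [norm_nonneg v]
  field_simp

lemma norm_sq_eq' {n : ℕ} {s : ℝ} {v : EuclideanSpace ℝ (Fin n)} (hs : 0 < s) (hv : ‖v‖ < s) :
    ‖v‖ ^ 2 = s ^ 2 - s ^ 2 / (egamma s v) ^ 2 := by
  have hgs := egamma_sq' hs hv
  have hg := egamma_pos' hs hv
  field_simp at hgs ⊢
  nlinarith [hgs]

lemma one_add_inner_pos' {n : ℕ} {s : ℝ} {u v : EuclideanSpace ℝ (Fin n)}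
    (hs : 0 < s) (hu : ‖u‖ < s) (hv : ‖v‖ < s) : 0 < 1 + ⟪u, v⟫ / s ^ 2 := by
  have h1 := abs_real_inner_le_norm u v
  have h2 : ‖u‖ * ‖v‖ < s * s := mul_lt_mul'' hu hv (norm_nonneg u) (norm_nonneg v)
  have hs2 : (0:ℝ) < s ^ 2 := by positivity
  have h4 : (-1:ℝ) < ⟪u, v⟫ / s ^ 2 :=
    (lt_div_iff₀ hs2).mpr (by nlinarith [neg_abs_le (⟪u, v⟫ : ℝ)])
  linarith

lemma mini_alg' (a K c : ℝ) (ha : a ≠ 0) (hc : c ≠ 0) :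
    a ^ 2 * (1 - ((1 / a) ^ 2 * K) / c) = a ^ 2 - K / c := by
  field_simp

set_option maxHeartbeats 2000000 in
lemma key_alg' (s g P U V : ℝ) (hs : s ≠ 0) (hg : g ≠ 0) (hg1 : 1 + g ≠ 0)
    (hp : 1 + P / s ^ 2 ≠ 0) (hU : U = s ^ 2 - s ^ 2 / g ^ 2) :
    (1 + P / s ^ 2) ^ 2 *
      (1 - ((1 / (1 + P / s ^ 2)) ^ 2 *
        ((1 + g * P / (s ^ 2 * (1 + g))) ^ 2 * U
          + 2 * (1 + g * P / (s ^ 2 * (1 + g))) * (1 / g) * P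
          + (1 / g) ^ 2 * V)) / s ^ 2)
      = (1 - U / s ^ 2) * (1 - V / s ^ 2) := by
  subst hU
  rw [mini_alg' _ _ _ hp (by positivity : (s:ℝ) ^ 2 ≠ 0)]
  field_simp
  ring

lemma eadd_norm_sq' {n : ℕ} {s : ℝ} {u v : EuclideanSpace ℝ (Fin n)}
    (hs : 0 < s) (hu : ‖u‖ < s) (hv : ‖v‖ < s) :
    (1 + ⟪u, v⟫ / s ^ 2) ^ 2 * (1 - ‖eadd s u v‖ ^ 2 / s ^ 2)
      = (1 - ‖u‖ ^ 2 / s ^ 2) * (1 - ‖v‖ ^ 2 / s ^ 2) := by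
  have hp := one_add_inner_pos' hs hu hv
  have hg := egamma_pos' hs hu
  set g := egamma s u with hgdef
  have hU : ‖u‖ ^ 2 = s ^ 2 - s ^ 2 / g ^ 2 := norm_sq_eq' hs hu
  have hnorm : ‖eadd s u v‖ ^ 2 =
      (1 / (1 + ⟪u, v⟫ / s ^ 2)) ^ 2 *
        ((1 + g * ⟪u, v⟫ / (s ^ 2 * (1 + g))) ^ 2 * ‖u‖ ^ 2
          + 2 * (1 + g * ⟪u, v⟫ / (s ^ 2 * (1 + g))) * (1 / g) * ⟪u, v⟫
          + (1 / g) ^ 2 * ‖v‖ ^ 2) := by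
    rw [eadd, norm_smul, mul_pow]
    simp only [← hgdef]
    congr 1
    · rw [Real.norm_eq_abs, sq_abs]
    · rw [← real_inner_self_eq_norm_sq]
      simp only [inner_add_left, inner_add_right, real_inner_smul_left, real_inner_smul_right,
        real_inner_comm v u]
      simp only [real_inner_self_eq_norm_sq]
      ring
  rw [hnorm]
  exact key_alg' s g ⟪u, v⟫ (‖u‖ ^ 2) (‖v‖ ^ 2) hs.ne' hg.ne' (by positivity) (ne_of_gt hp) hU

lemma egamma_eadd' {n : ℕ} {s : ℝ} {u v : EuclideanSpace ℝ (Fin n)}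
    (hs : 0 < s) (hu : ‖u‖ < s) (hv : ‖v‖ < s) :
    egamma s (eadd s u v) = egamma s u * egamma s v * (1 + ⟪u, v⟫ / s ^ 2) := by
  have hp := one_add_inner_pos' hs hu hv
  have hbu := ball_pos' hs hu
  have hbv := ball_pos' hs hv
  have hk := eadd_norm_sq' hs hu hv
  have h2 : 1 - ‖eadd s u v‖ ^ 2 / s ^ 2
      = (1 - ‖u‖ ^ 2 / s ^ 2) * (1 - ‖v‖ ^ 2 / s ^ 2) / (1 + ⟪u, v⟫ / s ^ 2) ^ 2 := by
    rw [eq_div_iff (by positivity)]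
    linarith [hk]
  unfold egamma
  rw [h2, Real.sqrt_div (by positivity), Real.sqrt_mul hbu.le, Real.sqrt_sq hp.le]
  have h3 : Real.sqrt (1 - ‖u‖ ^ 2 / s ^ 2) ≠ 0 := by positivity
  have h4 : Real.sqrt (1 - ‖v‖ ^ 2 / s ^ 2) ≠ 0 := by positivity
  field_simp

lemma vertex_eq' (s g1 g2 g3 m1 m2 m3 D P11 P12 P13 ga gb : ℝ)
    (hs : s ≠ 0) (hg1 : g1 ≠ 0)
    (hD : D = m1 * g1 + m2 * g2 + m3 * g3) (hDne : D ≠ 0)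
    (hP11 : P11 = s ^ 2 - s ^ 2 / g1 ^ 2)
    (hga : ga = g1 * g2 * (1 - P12 / s ^ 2))
    (hgb : gb = g1 * g3 * (1 - P13 / s ^ 2)) :
    g1 * (1 - (D⁻¹ * (m1 * g1 * P11 + m2 * g2 * P12 + m3 * g3 * P13)) / s ^ 2)
      = (m1 + m2 * ga + m3 * gb) / D := by
  subst hga hgb hP11 hD
  field_simp
  have hX : (g1 * m1 + m2 * g2 + m3 * g3)⁻¹ * (g1 * m1 + m2 * g2 + m3 * g3) = 1 :=
    inv_mul_cancel₀ (by intro h; apply hDne; linarith)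
  linear_combination (-(g1 * s ^ 2)) * hX

/-- **Circumgyrocenter is equigyrodistant from the vertices.** -/
theorem circumgyrocenter_equigyrodistant {n : ℕ} (hn : 2 ≤ n) (s : ℝ) (hs : 0 < s)
    (A1 A2 A3 O : EuclideanSpace ℝ (Fin n))
    (hA1 : ‖A1‖ < s) (hA2 : ‖A2‖ < s) (hA3 : ‖A3‖ < s)
    (h12 : A1 ≠ A2) (h13 : A1 ≠ A3) (h23 : A2 ≠ A3)
    (hncol : ¬ Collinear ℝ ({A1, A2, A3} : Set (EuclideanSpace ℝ (Fin n))))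
    (γ12 γ13 γ23 m1 m2 m3 D : ℝ)
    (hγ12 : γ12 = egamma s (eadd s (-A1) A2))
    (hγ13 : γ13 = egamma s (eadd s (-A1) A3))
    (hγ23 : γ23 = egamma s (eadd s (-A2) A3))
    (hm1 : m1 = (γ12 + γ13 - γ23 - 1) * (γ23 - 1))
    (hm2 : m2 = (γ12 - γ13 + γ23 - 1) * (γ13 - 1))
    (hm3 : m3 = (-γ12 + γ13 + γ23 - 1) * (γ12 - 1))
    (hD : D = m1 * egamma s A1 + m2 * egamma s A2 + m3 * egamma s A3)
    (hDne : D ≠ 0)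
    (hO : O = D⁻¹ • ((m1 * egamma s A1) • A1 + (m2 * egamma s A2) • A2 +
      (m3 * egamma s A3) • A3))
    (hOball : ‖O‖ < s) :
    ‖eadd s (-A1) O‖ = ‖eadd s (-A2) O‖ ∧ ‖eadd s (-A2) O‖ = ‖eadd s (-A3) O‖ := by
  have hnA1 : ‖(-A1 : EuclideanSpace ℝ (Fin n))‖ < s := by rwa [norm_neg]
  have hnA2 : ‖(-A2 : EuclideanSpace ℝ (Fin n))‖ < s := by rwa [norm_neg]
  have hnA3 : ‖(-A3 : EuclideanSpace ℝ (Fin n))‖ < s := by rwa [norm_neg]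
  set g1 := egamma s A1 with hg1def
  set g2 := egamma s A2 with hg2def
  set g3 := egamma s A3 with hg3def
  have hg1 := egamma_pos' hs hA1
  have hg2 := egamma_pos' hs hA2
  have hg3 := egamma_pos' hs hA3
  have hegneg : ∀ v : EuclideanSpace ℝ (Fin n), egamma s (-v) = egamma s v := by
    intro v; unfold egamma; rw [norm_neg]
  -- gamma factors between vertices
  have hga12 : γ12 = g1 * g2 * (1 - ⟪A1, A2⟫ / s ^ 2) := by
    rw [hγ12, egamma_eadd' hs hnA1 hA2, hegneg, inner_neg_left]
    ring_nf
    rw [hg1def, hg2def]; ring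
  have hga13 : γ13 = g1 * g3 * (1 - ⟪A1, A3⟫ / s ^ 2) := by
    rw [hγ13, egamma_eadd' hs hnA1 hA3, hegneg, inner_neg_left]
    ring_nf
    rw [hg1def, hg3def]; ring
  have hga23 : γ23 = g2 * g3 * (1 - ⟪A2, A3⟫ / s ^ 2) := by
    rw [hγ23, egamma_eadd' hs hnA2 hA3, hegneg, inner_neg_left]
    ring_nf
    rw [hg2def, hg3def]; ring
  -- diagonal inner products
  have hP11 : ⟪A1, A1⟫ = s ^ 2 - s ^ 2 / g1 ^ 2 := by
    rw [real_inner_self_eq_norm_sq]; exact norm_sq_eq' hs hA1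
  have hP22 : ⟪A2, A2⟫ = s ^ 2 - s ^ 2 / g2 ^ 2 := by
    rw [real_inner_self_eq_norm_sq]; exact norm_sq_eq' hs hA2
  have hP33 : ⟪A3, A3⟫ = s ^ 2 - s ^ 2 / g3 ^ 2 := by
    rw [real_inner_self_eq_norm_sq]; exact norm_sq_eq' hs hA3
  -- inner products with O
  have hq1 : ⟪A1, O⟫ = D⁻¹ * (m1 * g1 * ⟪A1, A1⟫ + m2 * g2 * ⟪A1, A2⟫ + m3 * g3 * ⟪A1, A3⟫) := by
    rw [hO]
    simp only [inner_add_right, real_inner_smul_right]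
    try ring
  have hq2 : ⟪A2, O⟫ = D⁻¹ * (m2 * g2 * ⟪A2, A2⟫ + m1 * g1 * ⟪A2, A1⟫ + m3 * g3 * ⟪A2, A3⟫) := by
    rw [hO]
    simp only [inner_add_right, real_inner_smul_right]
    try ring
  have hq3 : ⟪A3, O⟫ = D⁻¹ * (m3 * g3 * ⟪A3, A3⟫ + m1 * g1 * ⟪A3, A1⟫ + m2 * g2 * ⟪A3, A2⟫) := by
    rw [hO]
    simp only [inner_add_right, real_inner_smul_right]
    try ring
  -- the three "equal" quantities
  have he1 : g1 * (1 - ⟪A1, O⟫ / s ^ 2) = (m1 + m2 * γ12 + m3 * γ13) / D := by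
    rw [hq1]
    exact vertex_eq' s g1 g2 g3 m1 m2 m3 D _ _ _ _ _ hs.ne' hg1.ne' hD hDne hP11 hga12 hga13
  have he2 : g2 * (1 - ⟪A2, O⟫ / s ^ 2) = (m2 + m1 * γ12 + m3 * γ23) / D := by
    rw [hq2]
    refine vertex_eq' s g2 g1 g3 m2 m1 m3 D _ _ _ _ _ hs.ne' hg2.ne' (by linarith [hD]) hDne hP22 ?_ ?_
    · rw [hga12, real_inner_comm A2 A1]; ring
    · rw [hga23]
  have he3 : g3 * (1 - ⟪A3, O⟫ / s ^ 2) = (m3 + m1 * γ13 + m2 * γ23) / D := by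
    rw [hq3]
    refine vertex_eq' s g3 g1 g2 m3 m1 m2 D _ _ _ _ _ hs.ne' hg3.ne' (by linarith [hD]) hDne hP33 ?_ ?_
    · rw [hga13, real_inner_comm A3 A1]; ring
    · rw [hga23, real_inner_comm A3 A2]; ring
  have hnum12 : m1 + m2 * γ12 + m3 * γ13 = m2 + m1 * γ12 + m3 * γ23 := by
    rw [hm1, hm2, hm3]; ring
  have hnum23 : m2 + m1 * γ12 + m3 * γ23 = m3 + m1 * γ13 + m2 * γ23 := by
    rw [hm1, hm2, hm3]; ring
  have hE12 : g1 * (1 - ⟪A1, O⟫ / s ^ 2) = g2 * (1 - ⟪A2, O⟫ / s ^ 2) := by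
    rw [he1, he2, hnum12]
  have hE23 : g2 * (1 - ⟪A2, O⟫ / s ^ 2) = g3 * (1 - ⟪A3, O⟫ / s ^ 2) := by
    rw [he2, he3, hnum23]
  -- positivity of the E's
  have hpos : ∀ (A : EuclideanSpace ℝ (Fin n)), ‖A‖ < s →
      0 < 1 - ⟪A, O⟫ / s ^ 2 := by
    intro A hA
    have := one_add_inner_pos' hs (by rwa [norm_neg] : ‖(-A : EuclideanSpace ℝ (Fin n))‖ < s) hOball
    rw [inner_neg_left, neg_div, ← sub_eq_add_neg] at this
    exact this
  have hE1pos : 0 < g1 * (1 - ⟪A1, O⟫ / s ^ 2) := mul_pos hg1 (hpos A1 hA1)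
  have hE2pos : 0 < g2 * (1 - ⟪A2, O⟫ / s ^ 2) := mul_pos hg2 (hpos A2 hA2)
  -- relation between E_i and the distance to O
  have hwkey : ∀ (A : EuclideanSpace ℝ (Fin n)), ‖A‖ < s →
      (egamma s A * (1 - ⟪A, O⟫ / s ^ 2)) ^ 2 * (1 - ‖eadd s (-A) O‖ ^ 2 / s ^ 2)
        = 1 - ‖O‖ ^ 2 / s ^ 2 := by
    intro A hA
    have h := eadd_norm_sq' hs (by rwa [norm_neg] : ‖(-A : EuclideanSpace ℝ (Fin n))‖ < s) hOball
    rw [inner_neg_left, norm_neg] at h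
    have hg := egamma_sq' hs hA
    linear_combination (egamma s A) ^ 2 * h + (1 - ‖O‖ ^ 2 / s ^ 2) * hg
  have hw1 := hwkey A1 hA1
  have hw2 := hwkey A2 hA2
  have hw3 := hwkey A3 hA3
  rw [← hg1def] at hw1
  rw [← hg2def] at hw2
  rw [← hg3def] at hw3
  have hsq12 : ‖eadd s (-A1) O‖ ^ 2 = ‖eadd s (-A2) O‖ ^ 2 := by
    rw [hE12] at hw1
    have hE2ne : (g2 * (1 - ⟪A2, O⟫ / s ^ 2)) ^ 2 ≠ 0 := by positivity
    have h5 : 1 - ‖eadd s (-A1) O‖ ^ 2 / s ^ 2 = 1 - ‖eadd s (-A2) O‖ ^ 2 / s ^ 2 := by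
      have := hw1.trans hw2.symm
      exact mul_left_cancel₀ hE2ne this
    have hs2 : (0:ℝ) < s ^ 2 := by positivity
    field_simp at h5
    linarith [h5]
  have hsq23 : ‖eadd s (-A2) O‖ ^ 2 = ‖eadd s (-A3) O‖ ^ 2 := by
    rw [hE23] at hw2
    have hE3pos : 0 < g3 * (1 - ⟪A3, O⟫ / s ^ 2) := mul_pos hg3 (hpos A3 hA3)
    have hE3ne : (g3 * (1 - ⟪A3, O⟫ / s ^ 2)) ^ 2 ≠ 0 := by positivity
    have h5 : 1 - ‖eadd s (-A2) O‖ ^ 2 / s ^ 2 = 1 - ‖eadd s (-A3) O‖ ^ 2 / s ^ 2 := by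
      have := hw2.trans hw3.symm
      exact mul_left_cancel₀ hE3ne this
    have hs2 : (0:ℝ) < s ^ 2 := by positivity
    field_simp at h5
    linarith [h5]
  constructor
  · calc ‖eadd s (-A1) O‖ = Real.sqrt (‖eadd s (-A1) O‖ ^ 2) := (Real.sqrt_sq (norm_nonneg _)).symm
      _ = Real.sqrt (‖eadd s (-A2) O‖ ^ 2) := by rw [hsq12]
      _ = ‖eadd s (-A2) O‖ := Real.sqrt_sq (norm_nonneg _)
  · calc ‖eadd s (-A2) O‖ = Real.sqrt (‖eadd s (-A2) O‖ ^ 2) := (Real.sqrt_sq (norm_nonneg _)).symm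
      _ = Real.sqrt (‖eadd s (-A3) O‖ ^ 2) := by rw [hsq23]
      _ = ‖eadd s (-A3) O‖ := Real.sqrt_sq (norm_nonneg _)
end

section
/- Let A1, A2, A3 ∈ 𝔹 be pairwise distinct and not collinear in ℝⁿ. Define m1 = (γ12 + γ13 − γ23 − 1)(γ23 − 1), m2 = (γ12 − γ13 + γ23 − 1)(γ13 − 1), m3 = (−γ12 + γ13 + γ23 − 1)(γ12 − 1), assume D := m1·γ_{A1} + m2·γ_{A2} + m3·γ_{A3} ≠ 0, and let O = (m1·γ_{A1}·A1 + m2·γ_{A2}·A2 + m3·γ_{A3}·A3)/D (a point of ℝⁿ, not a priori in 𝔹). Set D3 = 1 + 2γ12γ13γ23 − γ12² − γ13² − γ23² and H3 = 2(γ12 − 1)(γ13 − 1)(γ23 − 1). Then ‖O‖ < s if and only if D3 > H3, equivalently if and only if (γ12 + γ13 + γ23 − 1)² > 2(γ12² + γ13² + γ23² − 1) (the circumgyrocircle existence condition). -/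
open RealInnerProductSpace

lemma aux_ball_pos {n : ℕ} {s : ℝ} (hs : 0 < s) {v : EuclideanSpace ℝ (Fin n)} (hv : ‖v‖ < s) :
    0 < 1 - ‖v‖ ^ 2 / s ^ 2 := by
  have h1 : ‖v‖^2 < s^2 := by nlinarith [norm_nonneg v]
  have h2 : (0:ℝ) < s^2 := by positivity
  rw [sub_pos, div_lt_one h2]; exact h1

lemma aux_egamma_pos {n : ℕ} {s : ℝ} (hs : 0 < s) {v : EuclideanSpace ℝ (Fin n)} (hv : ‖v‖ < s) :
    0 < egamma s v := by
  have := aux_ball_pos hs hv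
  unfold egamma; positivity

lemma aux_egamma_sq {n : ℕ} {s : ℝ} (hs : 0 < s) {v : EuclideanSpace ℝ (Fin n)} (hv : ‖v‖ < s) :
    (egamma s v) ^ 2 * (1 - ‖v‖ ^ 2 / s ^ 2) = 1 := by
  have h := aux_ball_pos hs hv
  unfold egamma
  rw [div_pow, one_pow, Real.sq_sqrt h.le, one_div, inv_mul_cancel₀ h.ne']

lemma aux_egamma_eq_of {n : ℕ} {s : ℝ} (hs : 0 < s) {v : EuclideanSpace ℝ (Fin n)}
    {x : ℝ} (hx : 0 < x) (hxx : x ^ 2 * (1 - ‖v‖ ^ 2 / s ^ 2) = 1) :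
    egamma s v = x := by
  have hx2 : (x:ℝ)^2 ≠ 0 := by positivity
  have h1 : 1 - ‖v‖ ^ 2 / s ^ 2 = (1/x)^2 := by
    field_simp
    field_simp at hxx
    linarith
  unfold egamma
  rw [h1, Real.sqrt_sq (by positivity)]
  field_simp

lemma aux_scalar_key (s γ δ p : ℝ) (hs : s ≠ 0) (hγ : γ ≠ 0) (hδ : δ ≠ 0)
    (h1γ : 1 + γ ≠ 0) (hsp : s^2 - p ≠ 0) :
    (γ*δ*(1 - p/s^2))^2 * (1 - ((1/(1 - p/s^2))^2 * ((γ*p/(s^2*(1+γ)) - 1)^2*(s^2*(γ^2-1)/γ^2)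
      + 2*((γ*p/(s^2*(1+γ)) - 1)*(1/γ))*p + (1/γ)^2*(s^2*(δ^2-1)/δ^2)))/s^2) = 1 := by
  have h1 : (1:ℝ) - p/s^2 = (s^2-p)/s^2 := by field_simp
  rw [h1]
  field_simp
  ring

lemma aux_egamma_eadd_neg {n : ℕ} {s : ℝ} (hs : 0 < s) {u v : EuclideanSpace ℝ (Fin n)}
    (hu : ‖u‖ < s) (hv : ‖v‖ < s) :
    egamma s (eadd s (-u) v) = egamma s u * egamma s v * (1 - ⟪u, v⟫ / s ^ 2) := by
  set γ := egamma s u with hγdef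
  set δ := egamma s v with hδdef
  set p := (⟪u, v⟫ : ℝ) with hpdef
  have hγ : 0 < γ := aux_egamma_pos hs hu
  have hδ : 0 < δ := aux_egamma_pos hs hv
  have hγsq := aux_egamma_sq hs hu
  have hδsq := aux_egamma_sq hs hv
  have hs2 : (0:ℝ) < s^2 := by positivity
  have hγne : γ ≠ 0 := hγ.ne'
  have hδne : δ ≠ 0 := hδ.ne'
  have h1γ : (1:ℝ) + γ ≠ 0 := by positivity
  have hu2 : ‖u‖^2 = s^2*(γ^2-1)/γ^2 := by
    field_simp at hγsq ⊢; linarith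
  have hv2 : ‖v‖^2 = s^2*(δ^2-1)/δ^2 := by
    field_simp at hδsq ⊢; linarith
  have hpabs : |p| < s^2 := by
    have h1 : |p| ≤ ‖u‖ * ‖v‖ := abs_real_inner_le_norm u v
    have h2 : ‖u‖ * ‖v‖ < s * s := by
      rcases eq_or_lt_of_le (norm_nonneg u) with h | h
      · rw [← h]; simpa using mul_pos hs hs
      · nlinarith [norm_nonneg v]
    nlinarith
  have ht : 0 < 1 - p / s^2 := by
    rw [sub_pos, div_lt_one hs2]; exact (abs_lt.mp hpabs).2
  have hsp : s^2 - p ≠ 0 := by nlinarith [(abs_lt.mp hpabs).2]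
  have hneg : egamma s (-u) = γ := by rw [hγdef]; unfold egamma; rw [norm_neg]
  have heq : eadd s (-u) v
      = (1/(1 - p/s^2)) • ((γ*p/(s^2*(1+γ)) - 1) • u + (1/γ) • v) := by
    unfold eadd
    rw [hneg, inner_neg_left]
    rw [show (1:ℝ) + -p / s^2 = 1 - p/s^2 by ring]
    congr 1
    module
  have hnorm : ‖eadd s (-u) v‖^2
      = (1/(1 - p/s^2))^2 * ((γ*p/(s^2*(1+γ)) - 1)^2*‖u‖^2
          + 2*((γ*p/(s^2*(1+γ)) - 1)*(1/γ))*p + (1/γ)^2*‖v‖^2) := by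
    rw [heq, norm_smul, mul_pow, norm_add_sq_real, norm_smul, norm_smul,
      real_inner_smul_left, real_inner_smul_right]
    rw [Real.norm_eq_abs, Real.norm_eq_abs, Real.norm_eq_abs, sq_abs, mul_pow, mul_pow,
      sq_abs, sq_abs]
    ring
  apply aux_egamma_eq_of hs (by positivity)
  rw [hnorm, hu2, hv2]
  exact aux_scalar_key s γ δ p hs.ne' hγne hδne h1γ hsp

lemma aux_norm_comb_sq {n : ℕ} (c1 c2 c3 : ℝ) (A1 A2 A3 : EuclideanSpace ℝ (Fin n)) :
    ‖c1 • A1 + c2 • A2 + c3 • A3‖^2 =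
      c1^2*‖A1‖^2 + c2^2*‖A2‖^2 + c3^2*‖A3‖^2
      + 2*c1*c2*⟪A1,A2⟫ + 2*c1*c3*⟪A1,A3⟫ + 2*c2*c3*⟪A2,A3⟫ := by
  have h := real_inner_self_eq_norm_sq (c1 • A1 + c2 • A2 + c3 • A3)
  simp only [inner_add_left, inner_add_right, real_inner_smul_left, real_inner_smul_right] at h
  rw [real_inner_self_eq_norm_sq, real_inner_self_eq_norm_sq, real_inner_self_eq_norm_sq] at h
  have c12 : (⟪A2,A1⟫:ℝ) = ⟪A1,A2⟫ := real_inner_comm A1 A2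
  have c13 : (⟪A3,A1⟫:ℝ) = ⟪A1,A3⟫ := real_inner_comm A1 A3
  have c23 : (⟪A3,A2⟫:ℝ) = ⟪A2,A3⟫ := real_inner_comm A2 A3
  linear_combination -h + c1*c2*c12 + c1*c3*c13 + c2*c3*c23

lemma aux_bpos {n : ℕ} {s : ℝ} (hs : 0 < s) {A X : EuclideanSpace ℝ (Fin n)}
    (hA : ‖A‖ < s) (hX : X ≠ 0) :
    0 < ⟪X,X⟫ - ⟪A,X⟫*⟪A,X⟫/s^2 := by
  have h1 : |(⟪A,X⟫:ℝ)| ≤ ‖A‖*‖X‖ := abs_real_inner_le_norm A X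
  have h2 : 0 < ‖X‖ := norm_pos_iff.mpr hX
  have h3 : (⟪X,X⟫:ℝ) = ‖X‖^2 := real_inner_self_eq_norm_sq X
  have h4 : (⟪A,X⟫:ℝ)^2 ≤ ‖A‖^2*‖X‖^2 := by
    nlinarith [abs_nonneg (⟪A,X⟫:ℝ), sq_abs (⟪A,X⟫:ℝ), norm_nonneg A, norm_nonneg X]
  have h6 : ‖A‖^2 < s^2 := by nlinarith [norm_nonneg A]
  have hs2 : (0:ℝ) < s^2 := by positivity
  rw [h3, sub_pos, div_lt_iff₀ hs2]
  nlinarith [mul_pos (mul_pos h2 h2) (sub_pos.mpr h6)]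

set_option maxHeartbeats 4000000 in
/-- **Circumgyrocircle existence condition.** -/
theorem circumgyrocircle_existence {n : ℕ} (hn : 2 ≤ n) (s : ℝ) (hs : 0 < s)
    (A1 A2 A3 : EuclideanSpace ℝ (Fin n)) (O : EuclideanSpace ℝ (Fin n))
    (hA1 : ‖A1‖ < s) (hA2 : ‖A2‖ < s) (hA3 : ‖A3‖ < s)
    (h12 : A1 ≠ A2) (h13 : A1 ≠ A3) (h23 : A2 ≠ A3)
    (hncol : ¬ Collinear ℝ ({A1, A2, A3} : Set (EuclideanSpace ℝ (Fin n))))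
    (γ12 γ13 γ23 m1 m2 m3 D D3 H3 : ℝ)
    (hγ12 : γ12 = egamma s (eadd s (-A1) A2))
    (hγ13 : γ13 = egamma s (eadd s (-A1) A3))
    (hγ23 : γ23 = egamma s (eadd s (-A2) A3))
    (hm1 : m1 = (γ12 + γ13 - γ23 - 1) * (γ23 - 1))
    (hm2 : m2 = (γ12 - γ13 + γ23 - 1) * (γ13 - 1))
    (hm3 : m3 = (-γ12 + γ13 + γ23 - 1) * (γ12 - 1))
    (hD : D = m1 * egamma s A1 + m2 * egamma s A2 + m3 * egamma s A3)
    (hDne : D ≠ 0)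
    (hO : O = D⁻¹ • ((m1 * egamma s A1) • A1 + (m2 * egamma s A2) • A2 +
      (m3 * egamma s A3) • A3))
    (hD3 : D3 = 1 + 2 * γ12 * γ13 * γ23 - γ12 ^ 2 - γ13 ^ 2 - γ23 ^ 2)
    (hH3 : H3 = 2 * (γ12 - 1) * (γ13 - 1) * (γ23 - 1)) :
    (‖O‖ < s ↔ D3 > H3) ∧
    (‖O‖ < s ↔ (γ12 + γ13 + γ23 - 1) ^ 2 > 2 * (γ12 ^ 2 + γ13 ^ 2 + γ23 ^ 2 - 1)) := by
  have hs0 : s ≠ 0 := hs.ne'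
  have hs2 : (0:ℝ) < s^2 := by positivity
  set g1 := egamma s A1 with hg1
  set g2 := egamma s A2 with hg2
  set g3 := egamma s A3 with hg3
  have hg1p : 0 < g1 := aux_egamma_pos hs hA1
  have hg2p : 0 < g2 := aux_egamma_pos hs hA2
  have hg3p : 0 < g3 := aux_egamma_pos hs hA3
  have hg1ne : g1 ≠ 0 := hg1p.ne'
  have hg2ne : g2 ≠ 0 := hg2p.ne'
  have hg3ne : g3 ≠ 0 := hg3p.ne'
  -- scalar relations
  have hn1 : g1^2*‖A1‖^2 = s^2*(g1^2-1) := by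
    have h := aux_egamma_sq hs hA1
    rw [← hg1] at h
    field_simp at h
    linear_combination -h
  have hn2 : g2^2*‖A2‖^2 = s^2*(g2^2-1) := by
    have h := aux_egamma_sq hs hA2
    rw [← hg2] at h
    field_simp at h
    linear_combination -h
  have hn3 : g3^2*‖A3‖^2 = s^2*(g3^2-1) := by
    have h := aux_egamma_sq hs hA3
    rw [← hg3] at h
    field_simp at h
    linear_combination -h
  set p12 := (⟪A1,A2⟫:ℝ) with hp12def
  set p13 := (⟪A1,A3⟫:ℝ) with hp13def
  set p23 := (⟪A2,A3⟫:ℝ) with hp23def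
  have e12 : γ12 = g1*g2*(1 - p12/s^2) := by
    rw [hγ12]; exact aux_egamma_eadd_neg hs hA1 hA2
  have e13 : γ13 = g1*g3*(1 - p13/s^2) := by
    rw [hγ13]; exact aux_egamma_eadd_neg hs hA1 hA3
  have e23 : γ23 = g2*g3*(1 - p23/s^2) := by
    rw [hγ23]; exact aux_egamma_eadd_neg hs hA2 hA3
  have hp12 : g1*g2*p12 = s^2*(g1*g2 - γ12) := by
    field_simp at e12; linear_combination e12
  have hp13 : g1*g3*p13 = s^2*(g1*g3 - γ13) := by
    field_simp at e13; linear_combination e13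
  have hp23 : g2*g3*p23 = s^2*(g2*g3 - γ23) := by
    field_simp at e23; linear_combination e23
  -- the quadratic form Q
  set Q := m1^2 + m2^2 + m3^2 + 2*m1*m2*γ12 + 2*m1*m3*γ13 + 2*m2*m3*γ23 with hQdef
  have hX2 : ‖(m1*g1) • A1 + (m2*g2) • A2 + (m3*g3) • A3‖^2 = s^2*(D^2 - Q) := by
    rw [aux_norm_comb_sq, hD, hQdef]
    linear_combination m1^2*hn1 + m2^2*hn2 + m3^2*hn3
      + 2*m1*m2*hp12 + 2*m1*m3*hp13 + 2*m2*m3*hp23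
  have hOn : ‖O‖^2 * D^2 = s^2*(D^2 - Q) := by
    rw [hO, norm_smul, Real.norm_eq_abs, mul_pow, sq_abs, hX2]
    field_simp
  have hD2 : (0:ℝ) < D^2 := by positivity
  have h5 : s^2*Q = D^2*(s^2 - ‖O‖^2) := by linear_combination hOn
  have hkey : ‖O‖ < s ↔ 0 < Q := by
    constructor
    · intro h
      have h2 : ‖O‖^2 < s^2 := by
        have := pow_lt_pow_left₀ h (norm_nonneg O) (by norm_num : (2:ℕ) ≠ 0)
        exact this
      have h6 : 0 < s^2*Q := by rw [h5]; exact mul_pos hD2 (sub_pos.mpr h2)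
      have h7 : Q = s^2*Q/s^2 := by field_simp
      rw [h7]; exact div_pos h6 hs2
    · intro hQpos
      have h7 : 0 < D^2*(s^2 - ‖O‖^2) := h5 ▸ mul_pos hs2 hQpos
      have h8 : 0 < s^2 - ‖O‖^2 := by
        have h9 := div_pos h7 hD2
        rwa [mul_div_cancel_left₀ _ hD2.ne'] at h9
      have h4 : ‖O‖^2 < s^2 := by linarith
      exact lt_of_pow_lt_pow_left₀ 2 hs.le h4
  -- Minkowski Gram determinant argument: D3 > 0
  set W2 := g2 • A2 - (γ12*g1) • A1 with hW2def
  set W3 := g3 • A3 - (γ13*g1) • A1 with hW3def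
  have i11 : (⟪A1,A1⟫:ℝ) = ‖A1‖^2 := real_inner_self_eq_norm_sq A1
  have i22 : (⟪A2,A2⟫:ℝ) = ‖A2‖^2 := real_inner_self_eq_norm_sq A2
  have i33 : (⟪A3,A3⟫:ℝ) = ‖A3‖^2 := real_inner_self_eq_norm_sq A3
  have c12 : (⟪A2,A1⟫:ℝ) = p12 := real_inner_comm A1 A2
  have c13 : (⟪A3,A1⟫:ℝ) = p13 := real_inner_comm A1 A3
  have c23 : (⟪A3,A2⟫:ℝ) = p23 := real_inner_comm A2 A3
  have hw22 : (⟪W2,W2⟫:ℝ) = g2^2*‖A2‖^2 - 2*γ12*g1*g2*p12 + γ12^2*g1^2*‖A1‖^2 := by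
    rw [hW2def]
    simp only [inner_sub_left, inner_sub_right, real_inner_smul_left, real_inner_smul_right]
    linear_combination g2^2*i22 + γ12^2*g1^2*i11 - γ12*g1*g2*c12
  have hw33 : (⟪W3,W3⟫:ℝ) = g3^2*‖A3‖^2 - 2*γ13*g1*g3*p13 + γ13^2*g1^2*‖A1‖^2 := by
    rw [hW3def]
    simp only [inner_sub_left, inner_sub_right, real_inner_smul_left, real_inner_smul_right]
    linear_combination g3^2*i33 + γ13^2*g1^2*i11 - γ13*g1*g3*c13
  have hw23 : (⟪W2,W3⟫:ℝ) = g2*g3*p23 - γ13*g1*g2*p12 - γ12*g1*g3*p13 + γ12*γ13*g1^2*‖A1‖^2 := by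
    rw [hW2def, hW3def]
    simp only [inner_sub_left, inner_sub_right, real_inner_smul_left, real_inner_smul_right]
    linear_combination -g2*g3*hp23def + γ12*γ13*g1^2*i11 - γ13*g1*g2*c12
  have ha2 : (⟪A1,W2⟫:ℝ) = g2*p12 - γ12*g1*‖A1‖^2 := by
    rw [hW2def]
    simp only [inner_sub_right, real_inner_smul_right]
    linear_combination -γ12*g1*i11
  have ha3 : (⟪A1,W3⟫:ℝ) = g3*p13 - γ13*g1*‖A1‖^2 := by
    rw [hW3def]
    simp only [inner_sub_right, real_inner_smul_right]
    linear_combination -γ13*g1*i11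
  -- solved forms
  have hn1' : ‖A1‖^2 = s^2*(g1^2-1)/g1^2 := by
    rw [eq_div_iff (by positivity)]; linear_combination hn1
  have hn2' : ‖A2‖^2 = s^2*(g2^2-1)/g2^2 := by
    rw [eq_div_iff (by positivity)]; linear_combination hn2
  have hn3' : ‖A3‖^2 = s^2*(g3^2-1)/g3^2 := by
    rw [eq_div_iff (by positivity)]; linear_combination hn3
  have hp12' : p12 = s^2*(g1*g2-γ12)/(g1*g2) := by
    rw [eq_div_iff (by positivity)]; linear_combination hp12
  have hp13' : p13 = s^2*(g1*g3-γ13)/(g1*g3) := by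
    rw [eq_div_iff (by positivity)]; linear_combination hp13
  have hp23' : p23 = s^2*(g2*g3-γ23)/(g2*g3) := by
    rw [eq_div_iff (by positivity)]; linear_combination hp23
  have hW3ne : W3 ≠ 0 := by
    intro h
    have ha3' : (0:ℝ) = g3*p13 - γ13*g1*‖A1‖^2 := by rw [← ha3, h, inner_zero_right]
    have key2 : (s^2*g1)*(g3 - γ13*g1) = 0 := by
      linear_combination (-g1)*ha3' - hp13 + γ13*hn1
    have h5 := (mul_eq_zero.mp key2).resolve_left (by positivity)
    have hg3e : g3 = γ13*g1 := by linarith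
    have h0 : g3 • A3 - (γ13*g1) • A1 = 0 := by rw [← hW3def]; exact h
    have h6 : g3 • A3 = (γ13*g1) • A1 := sub_eq_zero.mp h0
    rw [← hg3e] at h6
    exact h13 (smul_right_injective _ hg3ne h6).symm
  have hb22' : (g2^2*‖A2‖^2 - 2*γ12*g1*g2*p12 + γ12^2*g1^2*‖A1‖^2)
      - (g2*p12 - γ12*g1*‖A1‖^2)*(g2*p12 - γ12*g1*‖A1‖^2)/s^2 = s^2*(γ12^2-1) := by
    rw [hn1', hn2', hp12']; field_simp; ring
  have hb33' : (g3^2*‖A3‖^2 - 2*γ13*g1*g3*p13 + γ13^2*g1^2*‖A1‖^2)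
      - (g3*p13 - γ13*g1*‖A1‖^2)*(g3*p13 - γ13*g1*‖A1‖^2)/s^2 = s^2*(γ13^2-1) := by
    rw [hn1', hn3', hp13']; field_simp; ring
  have hb23' : (g2*g3*p23 - γ13*g1*g2*p12 - γ12*g1*g3*p13 + γ12*γ13*g1^2*‖A1‖^2)
      - (g2*p12 - γ12*g1*‖A1‖^2)*(g3*p13 - γ13*g1*‖A1‖^2)/s^2 = s^2*(γ12*γ13-γ23) := by
    rw [hn1', hp12', hp13', hp23']; field_simp; ring
  have hb33 : 0 < s^2*(γ13^2-1) := by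
    have h := aux_bpos hs hA1 hW3ne
    rwa [hw33, ha3, hb33'] at h
  obtain ⟨lam, hlam⟩ : ∃ l : ℝ, l = (s^2*(γ12*γ13-γ23)) / (s^2*(γ13^2-1)) := ⟨_, rfl⟩
  have hWne : W2 - lam • W3 ≠ 0 := by
    intro h
    have hW2e : W2 = lam • W3 := sub_eq_zero.mp h
    have e : (⟪A1,W2⟫:ℝ) = lam*⟪A1,W3⟫ := by rw [hW2e, real_inner_smul_right]
    rw [ha2, ha3] at e
    have key : (s^2*g1)*((g2 - γ12*g1) - lam*(g3-γ13*g1)) = 0 := by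
      linear_combination g1*e - hp12 + γ12*hn1 + lam*hp13 - lam*γ13*hn1
    have h5 := (mul_eq_zero.mp key).resolve_left (by positivity)
    have hsum : g2 - γ12*g1 = lam*(g3 - γ13*g1) := by linarith
    have h3v : (g2 - γ12*g1) • A1 = (lam*(g3 - γ13*g1)) • A1 := by rw [hsum]
    have h1v : g2 • A2 - (γ12*g1) • A1 = lam • (g3 • A3 - (γ13*g1) • A1) := by
      rw [← hW2def, ← hW3def]; exact hW2e
    have hvec : g2 • (A2 - A1) = (lam*g3) • (A3 - A1) := by
      linear_combination (norm := module) h1v - h3v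
    apply hncol
    rw [collinear_iff_exists_forall_eq_smul_vadd]
    refine ⟨A1, A3 - A1, ?_⟩
    intro p hp
    simp only [Set.mem_insert_iff, Set.mem_singleton_iff] at hp
    rcases hp with rfl | rfl | rfl
    · exact ⟨0, by simp⟩
    · refine ⟨g2⁻¹*(lam*g3), ?_⟩
      have h7 : (g2⁻¹ * g2) • (p - A1) = (g2⁻¹*(lam*g3)) • (A3 - A1) := by
        rw [mul_smul g2⁻¹ g2 (p - A1), hvec, smul_smul]
      rw [inv_mul_cancel₀ hg2ne, one_smul] at h7
      rw [vadd_eq_add, ← h7]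
      abel
    · exact ⟨1, by simp⟩
  have hbW := aux_bpos hs hA1 hWne
  have hWW : (⟪W2 - lam • W3, W2 - lam • W3⟫:ℝ)
      = ⟪W2,W2⟫ - 2*lam*⟪W2,W3⟫ + lam^2*⟪W3,W3⟫ := by
    have cw : (⟪W3,W2⟫:ℝ) = ⟪W2,W3⟫ := real_inner_comm W2 W3
    simp only [inner_sub_left, inner_sub_right, real_inner_smul_left, real_inner_smul_right]
    linear_combination -lam*cw
  have hAW : (⟪A1, W2 - lam • W3⟫:ℝ) = ⟪A1,W2⟫ - lam*⟪A1,W3⟫ := by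
    simp only [inner_sub_right, real_inner_smul_right]
  rw [hWW, hAW, hw22, hw23, hw33, ha2, ha3] at hbW
  have hbWγ : 0 < s^2*(γ12^2-1) - 2*lam*(s^2*(γ12*γ13-γ23)) + lam^2*(s^2*(γ13^2-1)) := by
    have e : ((g2^2*‖A2‖^2 - 2*γ12*g1*g2*p12 + γ12^2*g1^2*‖A1‖^2)
          - 2*lam*(g2*g3*p23 - γ13*g1*g2*p12 - γ12*g1*g3*p13 + γ12*γ13*g1^2*‖A1‖^2)
          + lam^2*(g3^2*‖A3‖^2 - 2*γ13*g1*g3*p13 + γ13^2*g1^2*‖A1‖^2))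
        - ((g2*p12 - γ12*g1*‖A1‖^2) - lam*(g3*p13 - γ13*g1*‖A1‖^2))
          * ((g2*p12 - γ12*g1*‖A1‖^2) - lam*(g3*p13 - γ13*g1*‖A1‖^2))/s^2
        = s^2*(γ12^2-1) - 2*lam*(s^2*(γ12*γ13-γ23)) + lam^2*(s^2*(γ13^2-1)) := by
      linear_combination hb22' - 2*lam*hb23' + lam^2*hb33'
    rw [← e]
    exact hbW
  have hD3pos : 0 < D3 := by
    have hfin : s^4*D3 = (s^2*(γ13^2-1))
        * (s^2*(γ12^2-1) - 2*lam*(s^2*(γ12*γ13-γ23)) + lam^2*(s^2*(γ13^2-1))) := by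
      rw [hlam, hD3]
      have hne : γ13^2 - 1 ≠ 0 := by
        intro h; rw [h, mul_zero] at hb33; exact lt_irrefl _ hb33
      field_simp
      ring
    have h9 : 0 < s^4*D3 := hfin ▸ mul_pos hb33 hbWγ
    have h10 := div_pos h9 (pow_pos hs 4)
    rwa [mul_div_cancel_left₀ _ (pow_pos hs 4).ne'] at h10
  -- conclusion
  have hQfac : Q = D3*(D3 - H3) := by
    rw [hQdef, hm1, hm2, hm3, hD3, hH3]; ring
  have hiff : (0 < Q) ↔ D3 > H3 := by
    rw [hQfac]
    constructor
    · intro h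
      have h2 := div_pos h hD3pos
      rw [mul_div_cancel_left₀ _ hD3pos.ne'] at h2
      linarith
    · intro h
      exact mul_pos hD3pos (by linarith)
  have hS : D3 - H3 = (γ12 + γ13 + γ23 - 1)^2 - 2*(γ12^2 + γ13^2 + γ23^2 - 1) := by
    rw [hD3, hH3]; ring
  refine ⟨hkey.trans hiff, (hkey.trans hiff).trans ?_⟩
  constructor
  · intro h; linarith
  · intro h; linarith
end

section
/- Fix two distinct points A, C ∈ ℝⁿ (n ≥ 2). For each real s > max(‖A‖, ‖C‖), let ⊕_s denote Einstein addition with parameter s and let γ(s) denote the gamma factor with parameter s of (−A) ⊕_s C. Then, as s → ∞, s²(γ(s) − 1) → (1/2)‖C − A‖² and s²(γ(s)² − 1) → ‖C − A‖². -/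
open RealInnerProductSpace

open Filter Topology

/-- **Euclidean limits of gamma factors**: as `s → ∞`,
`s²(γ(s) − 1) → ‖C − A‖²/2` and `s²(γ(s)² − 1) → ‖C − A‖²`. -/
theorem gamma_euclidean_limit {n : ℕ} (hn : 2 ≤ n)
    (A C : EuclideanSpace ℝ (Fin n)) (hAC : A ≠ C) :
    Tendsto (fun s : ℝ => s ^ 2 * (egamma s (eadd s (-A) C) - 1)) atTop
      (𝓝 (‖C - A‖ ^ 2 / 2)) ∧
    Tendsto (fun s : ℝ => s ^ 2 * ((egamma s (eadd s (-A) C)) ^ 2 - 1)) atTop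
      (𝓝 (‖C - A‖ ^ 2)) := by
  set u : EuclideanSpace ℝ (Fin n) := -A with hu
  set v : EuclideanSpace ℝ (Fin n) := C with hv
  set w : ℝ → EuclideanSpace ℝ (Fin n) := fun s => eadd s u v with hwdef
  have hs2 : Tendsto (fun s : ℝ => s ^ 2) atTop atTop :=
    tendsto_pow_atTop two_ne_zero
  have hinv : Tendsto (fun s : ℝ => (s ^ 2)⁻¹) atTop (𝓝 0) :=
    hs2.inv_tendsto_atTop
  have hdiv : ∀ c : ℝ, Tendsto (fun s : ℝ => c / s ^ 2) atTop (𝓝 0) := by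
    intro c
    simpa [div_eq_mul_inv] using hinv.const_mul c
  have hsqrt : Tendsto (fun t : ℝ => Real.sqrt (1 - t)) (𝓝 0) (𝓝 1) := by
    have hc : Continuous (fun t : ℝ => Real.sqrt (1 - t)) :=
      Real.continuous_sqrt.comp (continuous_const.sub continuous_id)
    simpa using hc.tendsto 0
  have hfrac : Tendsto (fun t : ℝ => 1 / Real.sqrt (1 - t)) (𝓝 0) (𝓝 1) := by
    simpa [one_div] using hsqrt.inv₀ one_ne_zero
  have hgu : Tendsto (fun s : ℝ => egamma s u) atTop (𝓝 1) := by
    have := hfrac.comp (hdiv (‖u‖ ^ 2))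
    simpa [egamma, Function.comp_def] using this
  -- coefficient 1
  have hone : Tendsto (fun t : ℝ => 1 / (1 + t)) (𝓝 0) (𝓝 1) := by
    have h1 : Tendsto (fun t : ℝ => 1 + t) (𝓝 0) (𝓝 1) := by
      have hc : Continuous (fun t : ℝ => 1 + t) := continuous_const.add continuous_id
      simpa using hc.tendsto 0
    simpa [one_div] using h1.inv₀ one_ne_zero
  have hc1 : Tendsto (fun s : ℝ => 1 / (1 + ⟪u, v⟫ / s ^ 2)) atTop (𝓝 1) := by
    have := hone.comp (hdiv ⟪u, v⟫)
    simpa [Function.comp_def] using this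
  have hc2 : Tendsto (fun s : ℝ => 1 / egamma s u) atTop (𝓝 1) := by
    simpa [one_div] using hgu.inv₀ one_ne_zero
  have hc3 : Tendsto (fun s : ℝ => egamma s u / (s ^ 2 * (1 + egamma s u))) atTop (𝓝 0) := by
    have hden : Tendsto (fun s : ℝ => s ^ 2 * (1 + egamma s u)) atTop atTop :=
      hs2.atTop_mul_pos (by norm_num) (tendsto_const_nhds.add hgu)
    exact hgu.div_atTop hden
  have hw : Tendsto w atTop (𝓝 (u + v)) := by
    have h3 : Tendsto (fun s : ℝ =>
        (egamma s u / (s ^ 2 * (1 + egamma s u))) • (⟪u, v⟫ • u)) atTop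
        (𝓝 ((0 : ℝ) • (⟪u, v⟫ • u))) := hc3.smul_const _
    have hin : Tendsto (fun s : ℝ =>
        u + (1 / egamma s u) • v + (egamma s u / (s ^ 2 * (1 + egamma s u))) • ⟪u, v⟫ • u)
        atTop (𝓝 (u + (1 : ℝ) • v + (0 : ℝ) • (⟪u, v⟫ • u))) :=
      (tendsto_const_nhds.add (hc2.smul_const v)).add h3
    have := hc1.smul hin
    simpa [hwdef, eadd] using this
  have huv : u + v = C - A := by
    rw [hu, hv]; abel
  have hnw : Tendsto (fun s : ℝ => ‖w s‖ ^ 2) atTop (𝓝 (‖C - A‖ ^ 2)) := by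
    have := (hw.norm).pow 2
    rwa [huv] at this
  have hx : Tendsto (fun s : ℝ => ‖w s‖ ^ 2 / s ^ 2) atTop (𝓝 0) := by
    have := hnw.mul hinv
    simpa [div_eq_mul_inv] using this
  have hev : ∀ᶠ s : ℝ in atTop, 0 < s ∧ ‖w s‖ ^ 2 / s ^ 2 < 1 / 2 :=
    (eventually_gt_atTop 0).and (hx.eventually (eventually_lt_nhds (by norm_num)))
  constructor
  · -- first limit
    have hlim : Tendsto (fun s : ℝ => ‖w s‖ ^ 2 /
        (Real.sqrt (1 - ‖w s‖ ^ 2 / s ^ 2) * (1 + Real.sqrt (1 - ‖w s‖ ^ 2 / s ^ 2))))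
        atTop (𝓝 (‖C - A‖ ^ 2 / 2)) := by
      have hr : Tendsto (fun s : ℝ => Real.sqrt (1 - ‖w s‖ ^ 2 / s ^ 2)) atTop (𝓝 1) :=
        hsqrt.comp hx
      have hden : Tendsto (fun s : ℝ =>
          Real.sqrt (1 - ‖w s‖ ^ 2 / s ^ 2) * (1 + Real.sqrt (1 - ‖w s‖ ^ 2 / s ^ 2)))
          atTop (𝓝 2) := by
        have h2 := hr.mul ((tendsto_const_nhds (x := (1:ℝ))).add hr)
        norm_num at h2
        exact h2
      exact hnw.div hden two_ne_zero
    refine Tendsto.congr' ?_ hlim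
    filter_upwards [hev] with s hs
    obtain ⟨hs0, hlt⟩ := hs
    set x := ‖w s‖ ^ 2 / s ^ 2 with hxdef
    have hx0 : 0 ≤ x := by positivity
    have hx1 : 0 < 1 - x := by linarith
    have hr : 0 < Real.sqrt (1 - x) := Real.sqrt_pos.mpr hx1
    have hr2 : Real.sqrt (1 - x) ^ 2 = 1 - x := Real.sq_sqrt hx1.le
    have h1r : (0:ℝ) < 1 + Real.sqrt (1 - x) := by linarith
    have hegamma : egamma s (w s) = 1 / Real.sqrt (1 - x) := by
      rw [egamma, hxdef]
    show ‖w s‖ ^ 2 / (Real.sqrt (1 - x) * (1 + Real.sqrt (1 - x)))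
      = s ^ 2 * (egamma s (w s) - 1)
    have hN : ‖w s‖ ^ 2 = s ^ 2 * (1 - Real.sqrt (1 - x) ^ 2) := by
      rw [hr2, hxdef]
      field_simp
      ring
    rw [hegamma, hN]
    have hrne : Real.sqrt (1 - x) ≠ 0 := ne_of_gt hr
    have h1rne : (1 + Real.sqrt (1 - x)) ≠ 0 := ne_of_gt h1r
    field_simp
    ring
  · -- second limit
    have hlim : Tendsto (fun s : ℝ => ‖w s‖ ^ 2 / (1 - ‖w s‖ ^ 2 / s ^ 2))
        atTop (𝓝 (‖C - A‖ ^ 2)) := by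
      have hden : Tendsto (fun s : ℝ => 1 - ‖w s‖ ^ 2 / s ^ 2) atTop (𝓝 1) := by
        have h2 := (tendsto_const_nhds (x := (1:ℝ))).sub hx
        norm_num at h2
        exact h2
      have := hnw.div hden one_ne_zero
      rw [div_one] at this
      exact this
    refine Tendsto.congr' ?_ hlim
    filter_upwards [hev] with s hs
    obtain ⟨hs0, hlt⟩ := hs
    set x := ‖w s‖ ^ 2 / s ^ 2 with hxdef
    have hx0 : 0 ≤ x := by positivity
    have hx1 : 0 < 1 - x := by linarith
    have hr2 : Real.sqrt (1 - x) ^ 2 = 1 - x := Real.sq_sqrt hx1.le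
    have hegamma : egamma s (w s) = 1 / Real.sqrt (1 - x) := by
      rw [egamma, hxdef]
    show ‖w s‖ ^ 2 / (1 - x) = s ^ 2 * ((egamma s (w s)) ^ 2 - 1)
    have hN : ‖w s‖ ^ 2 = s ^ 2 * (1 - Real.sqrt (1 - x) ^ 2) := by
      rw [hr2, hxdef]
      field_simp
      ring
    have hr : 0 < Real.sqrt (1 - x) := Real.sqrt_pos.mpr hx1
    rw [hegamma, hN, div_pow, one_pow, hr2]
    have hrne : Real.sqrt (1 - x) ≠ 0 := ne_of_gt hr
    field_simp
end

section
/- (Gyrotangent–Gyrosecant Theorem.) Let O ∈ 𝔹, 0 < R < s, and let A1, A2, A3 ∈ 𝔹 be pairwise distinct, not collinear in ℝⁿ, with |OA1| = |OA2| = |OA3| = R. Let P ∈ 𝔹, P ∉ {A1, A2, A3}, be a point such that A2 lies strictly between P and A3 on the Euclidean segment from P to A3, and such that ⟨⊖A1 ⊕ P, ⊖A1 ⊕ O⟩ = 0 (the gyroline through P and A1 is gyrotangent to the gyrocircle at A1). Then γ_{|PA1|}²·|PA1|² = (2/(γ_{|A2A3|} + 1)) · γ_{|PA2|}·|PA2|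 · γ_{|PA3|}·|PA3|. -/
open RealInnerProductSpace

lemma sqrt_cancel {a b : ℝ} (ha : 0 ≤ a) (hb : 0 ≤ b) (h : a ^ 2 = b ^ 2) : a = b := by
  rw [← Real.sqrt_sq ha, h, Real.sqrt_sq hb]

lemma ip_pos {n : ℕ} {s : ℝ} (hs : 0 < s) {u v : EuclideanSpace ℝ (Fin n)}
    (hu : ‖u‖ < s) (hv : ‖v‖ < s) : 0 < s ^ 2 - ⟪u, v⟫ := by
  have h1 := abs_real_inner_le_norm u v
  have h2 : ‖u‖ * ‖v‖ < s ^ 2 := by nlinarith [norm_nonneg u, norm_nonneg v]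
  have h3 : ⟪u, v⟫ < s ^ 2 := lt_of_le_of_lt (le_trans (le_abs_self _) h1) h2
  linarith

lemma gammaR_nonneg (s d : ℝ) : 0 ≤ gammaR s d := by
  rw [gammaR]; positivity

lemma eadd_repr {n : ℕ} {s : ℝ} (hs : 0 < s) {u : EuclideanSpace ℝ (Fin n)} (hu : ‖u‖ < s)
    (v : EuclideanSpace ℝ (Fin n)) :
    eadd s (-u) v = (s ^ 2 / (s ^ 2 - ⟪u, v⟫)) •
      ((Real.sqrt (1 - ‖u‖ ^ 2 / s ^ 2)) • v +
       (⟪u, v⟫ / (s ^ 2 * (Real.sqrt (1 - ‖u‖ ^ 2 / s ^ 2) + 1)) - 1) • u) := by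
  have hs2 : (0:ℝ) < s ^ 2 := by positivity
  have hu2 : ‖u‖ ^ 2 < s ^ 2 := by
    have := norm_nonneg u
    nlinarith
  have hg : 0 < 1 - ‖u‖ ^ 2 / s ^ 2 := by
    rw [sub_pos, div_lt_one hs2]; exact hu2
  set r := Real.sqrt (1 - ‖u‖ ^ 2 / s ^ 2) with hrdef
  have hr : 0 < r := Real.sqrt_pos.2 hg
  have hγ : egamma s (-u) = 1 / r := by simp [egamma, hrdef]
  rw [eadd, hγ, inner_neg_left]
  have h1 : (1:ℝ) + -⟪u,v⟫ / s ^ 2 = (s ^ 2 - ⟪u,v⟫)/s^2 := by field_simp; ring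
  rw [h1]
  match_scalars <;> (field_simp; try ring)

private lemma core_scalar {s x y z U r : ℝ} (hs : s ≠ 0) (hr1 : r + 1 ≠ 0)
    (hrel : s ^ 2 * r ^ 2 = s ^ 2 - U) :
    (s^2 - x) * (s^2 - y) -
      s^2 * (r^2*z + r*y*(x/(s^2*(r+1)) - 1) + r*x*(y/(s^2*(r+1)) - 1)
        + (x/(s^2*(r+1)) - 1)*(y/(s^2*(r+1)) - 1)*U)
      = (s^2 - z) * (s^2 - U) := by
  have hA : s^2*(r+1) ≠ 0 := by
    intro h; rcases mul_eq_zero.1 h with h|h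
    · exact hs (pow_eq_zero_iff (by norm_num) |>.1 h)
    · exact hr1 h
  have hU : U = s^2 - s^2*r^2 := by linear_combination hrel
  subst hU
  field_simp
  ring

lemma inner_eadd_eadd {n : ℕ} {s : ℝ} (hs : 0 < s) {u v w : EuclideanSpace ℝ (Fin n)}
    (hu : ‖u‖ < s) (hv : ‖v‖ < s) (hw : ‖w‖ < s) :
    (s ^ 2 - ⟪u, v⟫) * (s ^ 2 - ⟪u, w⟫) * (s ^ 2 - ⟪eadd s (-u) v, eadd s (-u) w⟫)
      = s ^ 2 * (s ^ 2 - ⟪v, w⟫) * (s ^ 2 - ‖u‖ ^ 2) := by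
  have hs2 : (0:ℝ) < s ^ 2 := by positivity
  have hu2 : ‖u‖ ^ 2 < s ^ 2 := by have := norm_nonneg u; nlinarith
  have hg : 0 < 1 - ‖u‖ ^ 2 / s ^ 2 := by rw [sub_pos, div_lt_one hs2]; exact hu2
  have hxv : s ^ 2 - ⟪u, v⟫ ≠ 0 := (ip_pos hs hu hv).ne'
  have hxw : s ^ 2 - ⟪u, w⟫ ≠ 0 := (ip_pos hs hu hw).ne'
  set r := Real.sqrt (1 - ‖u‖ ^ 2 / s ^ 2) with hrdef
  have hr : 0 < r := Real.sqrt_pos.2 hg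
  have hrel : s ^ 2 * r ^ 2 = s ^ 2 - ‖u‖ ^ 2 := by
    rw [hrdef, Real.sq_sqrt hg.le]; field_simp
  have hr1 : r + 1 ≠ 0 := by positivity
  set x := ⟪u,v⟫ with hxdef
  set y := ⟪u,w⟫ with hydef
  have hinner : ⟪eadd s (-u) v, eadd s (-u) w⟫ =
      (s^2/(s^2-x)) * ((s^2/(s^2-y)) *
        (r^2*⟪v,w⟫ + r*y*(x/(s^2*(r+1)) - 1) + r*x*(y/(s^2*(r+1)) - 1)
          + (x/(s^2*(r+1)) - 1)*(y/(s^2*(r+1)) - 1)*‖u‖^2)) := by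
    rw [eadd_repr hs hu v, eadd_repr hs hu w, real_inner_smul_left, real_inner_smul_right]
    rw [← hrdef, ← hxdef, ← hydef]
    congr 1
    congr 1
    simp only [inner_add_left, inner_add_right, real_inner_smul_left, real_inner_smul_right,
      real_inner_self_eq_norm_sq]
    simp only [real_inner_comm u v, real_inner_comm u w, real_inner_comm v w, ← hxdef, ← hydef]
    ring
  rw [hinner]
  have key := core_scalar (s := s) (x := x) (y := y) (z := ⟪v,w⟫) (U := ‖u‖^2) hs.ne' hr1 hrel
  have expand : (s ^ 2 - x) * (s ^ 2 - y) *
      (s ^ 2 - s^2/(s^2-x) * ((s^2/(s^2-y)) *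
        (r^2*⟪v,w⟫ + r*y*(x/(s^2*(r+1)) - 1) + r*x*(y/(s^2*(r+1)) - 1)
          + (x/(s^2*(r+1)) - 1)*(y/(s^2*(r+1)) - 1)*‖u‖^2)))
      = s^2 * ((s ^ 2 - x) * (s ^ 2 - y) -
        s^2 * (r^2*⟪v,w⟫ + r*y*(x/(s^2*(r+1)) - 1) + r*x*(y/(s^2*(r+1)) - 1)
          + (x/(s^2*(r+1)) - 1)*(y/(s^2*(r+1)) - 1)*‖u‖^2)) := by
    field_simp
  rw [expand, key]
  ring

lemma norm_eadd_sq {n : ℕ} {s : ℝ} (hs : 0 < s) {u v : EuclideanSpace ℝ (Fin n)}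
    (hu : ‖u‖ < s) (hv : ‖v‖ < s) :
    (s ^ 2 - ⟪u, v⟫) ^ 2 * (s ^ 2 - ‖eadd s (-u) v‖ ^ 2)
      = s ^ 2 * (s ^ 2 - ‖u‖ ^ 2) * (s ^ 2 - ‖v‖ ^ 2) := by
  have h := inner_eadd_eadd hs hu hv hv
  simp only [real_inner_self_eq_norm_sq] at h
  linear_combination h

lemma gammaR_eq_div {s d k g h w : ℝ} (hs : 0 < s) (hg : 0 < g) (hh : 0 < h) (hk : 0 < k)
    (hw : w ^ 2 = g * h) (hwpos : 0 ≤ w)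
    (H : k ^ 2 * (s ^ 2 - d ^ 2) = s ^ 2 * g * h) : gammaR s d = k / w := by
  have hX : 1 - d ^ 2 / s ^ 2 = g * h / k ^ 2 := by
    rw [eq_div_iff (pow_ne_zero 2 hk.ne')]
    field_simp
    linear_combination H
  rw [gammaR, hX, show g * h / k ^ 2 = (w / k) ^ 2 by rw [div_pow, hw],
    Real.sqrt_sq (div_nonneg hwpos hk.le), one_div_div]

lemma gamma_sq_mul {s d k g h : ℝ} (hs : 0 < s) (hg : 0 < g) (hh : 0 < h) (hk : 0 < k)
    (H : k ^ 2 * (s ^ 2 - d ^ 2) = s ^ 2 * g * h) :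
    (gammaR s d) ^ 2 * d ^ 2 = s ^ 2 * (k ^ 2 - g * h) / (g * h) := by
  have hs2 : (0:ℝ) < s ^ 2 := by positivity
  have hX : 1 - d ^ 2 / s ^ 2 = g * h / k ^ 2 := by
    rw [eq_div_iff (pow_ne_zero 2 hk.ne')]
    field_simp
    linear_combination H
  have hXpos : 0 < 1 - d ^ 2 / s ^ 2 := by rw [hX]; positivity
  have hγ : (gammaR s d) ^ 2 = k ^ 2 / (g * h) := by
    rw [gammaR, div_pow, one_pow, Real.sq_sqrt hXpos.le, hX, one_div_div]
  have hkd : k ^ 2 * d ^ 2 = s ^ 2 * (k ^ 2 - g * h) := by linear_combination (-1 : ℝ) * H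
  rw [hγ, div_mul_eq_mul_div, hkd]

set_option maxHeartbeats 1000000 in
/-- **Gyrotangent–Gyrosecant Theorem.** -/
theorem gyrotangent_gyrosecant {n : ℕ} (hn : 2 ≤ n) (s : ℝ) (hs : 0 < s)
    (O A1 A2 A3 P : EuclideanSpace ℝ (Fin n)) (hO : ‖O‖ < s)
    (R : ℝ) (hRpos : 0 < R) (hRs : R < s)
    (hA1 : ‖A1‖ < s) (hA2 : ‖A2‖ < s) (hA3 : ‖A3‖ < s) (hP : ‖P‖ < s)
    (h12 : A1 ≠ A2) (h13 : A1 ≠ A3) (h23 : A2 ≠ A3)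
    (hncol : ¬ Collinear ℝ ({A1, A2, A3} : Set (EuclideanSpace ℝ (Fin n))))
    (hR1 : ‖eadd s (-O) A1‖ = R) (hR2 : ‖eadd s (-O) A2‖ = R)
    (hR3 : ‖eadd s (-O) A3‖ = R)
    (hP1 : P ≠ A1) (hP2 : P ≠ A2) (hP3 : P ≠ A3)
    (hbtw : Sbtw ℝ P A2 A3)
    (htan : ⟪eadd s (-A1) P, eadd s (-A1) O⟫ = 0)
    (d1 d2 d3 d23 : ℝ)
    (hd1 : d1 = ‖eadd s (-P) A1‖) (hd2 : d2 = ‖eadd s (-P) A2‖)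
    (hd3 : d3 = ‖eadd s (-P) A3‖) (hd23 : d23 = ‖eadd s (-A2) A3‖) :
    (gammaR s d1) ^ 2 * d1 ^ 2 =
      2 / (gammaR s d23 + 1) * (gammaR s d2 * d2) * (gammaR s d3 * d3) := by

  -- basic positivity
  have hs2 : (0:ℝ) < s ^ 2 := by positivity
  have hgO : (0:ℝ) < (s ^ 2 - ‖O‖ ^ 2) := by nlinarith [norm_nonneg O]
  have hgP : (0:ℝ) < (s ^ 2 - ‖P‖ ^ 2) := by nlinarith [norm_nonneg P]
  have hg1 : (0:ℝ) < (s ^ 2 - ‖A1‖ ^ 2) := by nlinarith [norm_nonneg A1]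
  have hg2 : (0:ℝ) < (s ^ 2 - ‖A2‖ ^ 2) := by nlinarith [norm_nonneg A2]
  have hg3 : (0:ℝ) < (s ^ 2 - ‖A3‖ ^ 2) := by nlinarith [norm_nonneg A3]
  have hmP : (0:ℝ) < (s ^ 2 - ⟪O, P⟫) := ip_pos hs hO hP
  have hm1 : (0:ℝ) < (s ^ 2 - ⟪O, A1⟫) := ip_pos hs hO hA1
  have hm2p : (0:ℝ) < (s ^ 2 - ⟪O, A2⟫) := ip_pos hs hO hA2
  have hm3p : (0:ℝ) < (s ^ 2 - ⟪O, A3⟫) := ip_pos hs hO hA3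
  have hk1 : (0:ℝ) < (s ^ 2 - ⟪P, A1⟫) := ip_pos hs hP hA1
  have hk2p : (0:ℝ) < (s ^ 2 - ⟪P, A2⟫) := ip_pos hs hP hA2
  have hkp : (0:ℝ) < (s ^ 2 - ⟪P, A3⟫) := ip_pos hs hP hA3
  have hBp : (0:ℝ) < (s ^ 2 - ⟪A2, A3⟫) := ip_pos hs hA2 hA3
  have heR : (0:ℝ) < s ^ 2 - R ^ 2 := by nlinarith
  -- betweenness extraction
  obtain ⟨t, ht01, hA2e⟩ := hbtw.mem_image_Ioo
  rw [AffineMap.lineMap_apply_module'] at hA2e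
  have ht0 : (0:ℝ) < t := ht01.1
  have ht1 : t < 1 := ht01.2
  have hA2eq : A2 = P + t • (A3 - P) := by rw [← hA2e]; abel
  -- scalar expansions of A2
  have h1 : ⟪O, A2⟫ = (1 - t) * ⟪O, P⟫ + t * ⟪O, A3⟫ := by
    rw [hA2eq, inner_add_right, real_inner_smul_right, inner_sub_right]; ring
  have h2 : ⟪P, A2⟫ = (1 - t) * ‖P‖ ^ 2 + t * ⟪P, A3⟫ := by
    rw [hA2eq, inner_add_right, real_inner_smul_right, inner_sub_right,
      real_inner_self_eq_norm_sq]; ring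
  have h3 : ⟪A2, A3⟫ = (1 - t) * ⟪P, A3⟫ + t * ‖A3‖ ^ 2 := by
    rw [hA2eq, inner_add_left, real_inner_smul_left, inner_sub_left,
      real_inner_self_eq_norm_sq]; ring
  have h4 : ‖A2‖ ^ 2 = (1 - t) ^ 2 * ‖P‖ ^ 2 + 2 * t * (1 - t) * ⟪P, A3⟫ + t ^ 2 * ‖A3‖ ^ 2 := by
    have e : ‖A2‖ ^ 2 = ⟪A2, A2⟫ := (real_inner_self_eq_norm_sq A2).symm
    rw [e, hA2eq]
    simp only [inner_add_left, inner_add_right, inner_sub_left, inner_sub_right,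
      real_inner_smul_left, real_inner_smul_right]
    simp only [real_inner_self_eq_norm_sq, real_inner_comm P A3]
    ring
  -- gyrocircle and distance identities
  have HO1 : (s ^ 2 - ⟪O, A1⟫) ^ 2 * (s ^ 2 - R ^ 2) = s ^ 2 * (s ^ 2 - ‖O‖ ^ 2) * (s ^ 2 - ‖A1‖ ^ 2) := by
    have h := norm_eadd_sq hs hO hA1; rw [hR1] at h; linear_combination h
  have HO2 : (s ^ 2 - ⟪O, A2⟫) ^ 2 * (s ^ 2 - R ^ 2) = s ^ 2 * (s ^ 2 - ‖O‖ ^ 2) * (s ^ 2 - ‖A2‖ ^ 2) := by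
    have h := norm_eadd_sq hs hO hA2; rw [hR2] at h; linear_combination h
  have HO3 : (s ^ 2 - ⟪O, A3⟫) ^ 2 * (s ^ 2 - R ^ 2) = s ^ 2 * (s ^ 2 - ‖O‖ ^ 2) * (s ^ 2 - ‖A3‖ ^ 2) := by
    have h := norm_eadd_sq hs hO hA3; rw [hR3] at h; linear_combination h
  have HP1 : (s ^ 2 - ⟪P, A1⟫) ^ 2 * (s ^ 2 - d1 ^ 2) = s ^ 2 * (s ^ 2 - ‖P‖ ^ 2) * (s ^ 2 - ‖A1‖ ^ 2) := by
    have h := norm_eadd_sq hs hP hA1; rw [← hd1] at h; linear_combination h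
  have HP2 : (s ^ 2 - ⟪P, A2⟫) ^ 2 * (s ^ 2 - d2 ^ 2) = s ^ 2 * (s ^ 2 - ‖P‖ ^ 2) * (s ^ 2 - ‖A2‖ ^ 2) := by
    have h := norm_eadd_sq hs hP hA2; rw [← hd2] at h; linear_combination h
  have HP3 : (s ^ 2 - ⟪P, A3⟫) ^ 2 * (s ^ 2 - d3 ^ 2) = s ^ 2 * (s ^ 2 - ‖P‖ ^ 2) * (s ^ 2 - ‖A3‖ ^ 2) := by
    have h := norm_eadd_sq hs hP hA3; rw [← hd3] at h; linear_combination h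
  have H23 : (s ^ 2 - ⟪A2, A3⟫) ^ 2 * (s ^ 2 - d23 ^ 2) = s ^ 2 * (s ^ 2 - ‖A2‖ ^ 2) * (s ^ 2 - ‖A3‖ ^ 2) := by
    have h := norm_eadd_sq hs hA2 hA3; rw [← hd23] at h; linear_combination h
  -- tangency
  have HT : (s ^ 2 - ⟪P, A1⟫) * (s ^ 2 - ⟪O, A1⟫) = (s ^ 2 - ⟪O, P⟫) * (s ^ 2 - ‖A1‖ ^ 2) := by
    have h := inner_eadd_eadd hs hA1 hP hO
    rw [htan, sub_zero, real_inner_comm P A1, real_inner_comm O A1, real_inner_comm O P] at h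
    have h' : s ^ 2 * ((s ^ 2 - ⟪P, A1⟫) * (s ^ 2 - ⟪O, A1⟫)) = s ^ 2 * ((s ^ 2 - ⟪O, P⟫) * (s ^ 2 - ‖A1‖ ^ 2)) := by linear_combination h
    exact mul_left_cancel₀ (ne_of_gt hs2) h'
  -- N3 positivity
  have hsubn : ‖A3 - P‖ ^ 2 = ‖A3‖ ^ 2 - 2 * ⟪P, A3⟫ + ‖P‖ ^ 2 := by
    rw [norm_sub_sq_real, real_inner_comm P A3]
  have hA3P : A3 - P ≠ 0 := sub_ne_zero.mpr (Ne.symm hP3)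
  have hOm : (0:ℝ) < ‖A3‖ ^ 2 - 2 * ⟪P, A3⟫ + ‖P‖ ^ 2 := by
    rw [← hsubn]; exact pow_pos (norm_pos_iff.mpr hA3P) 2
  have hN3 : (0:ℝ) < ((s ^ 2 - ⟪P, A3⟫) ^ 2 - (s ^ 2 - ‖P‖ ^ 2) * (s ^ 2 - ‖A3‖ ^ 2)) := by
    rw [show ((s ^ 2 - ⟪P, A3⟫) ^ 2 - (s ^ 2 - ‖P‖ ^ 2) * (s ^ 2 - ‖A3‖ ^ 2)) = (⟪P, A3⟫ - ‖P‖ ^ 2) ^ 2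
        + (s ^ 2 - ‖P‖ ^ 2) * (‖A3‖ ^ 2 - 2 * ⟪P, A3⟫ + ‖P‖ ^ 2) from by ring]
    exact add_pos_of_nonneg_of_pos (sq_nonneg _) (mul_pos hgP hOm)
  have hapos : (0:ℝ) < ((s ^ 2 - R ^ 2) * (⟪O, A3⟫ - ⟪O, P⟫) ^ 2 + s ^ 2 * (s ^ 2 - ‖O‖ ^ 2) * (‖A3‖ ^ 2 - 2 * ⟪P, A3⟫ + ‖P‖ ^ 2)) :=
    add_pos_of_nonneg_of_pos (mul_nonneg heR.le (sq_nonneg _))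
      (mul_pos (mul_pos hs2 hgO) hOm)
  -- sqrt atoms
  set se := Real.sqrt (s ^ 2 - R ^ 2) with hsedef
  set sO := Real.sqrt (s ^ 2 - ‖O‖ ^ 2) with hsOdef
  set s2 := Real.sqrt (s ^ 2 - ‖A2‖ ^ 2) with hs2def
  set s3 := Real.sqrt (s ^ 2 - ‖A3‖ ^ 2) with hs3def
  have hsqe : se ^ 2 = s ^ 2 - R ^ 2 := Real.sq_sqrt heR.le
  have hsqO : sO ^ 2 = (s ^ 2 - ‖O‖ ^ 2) := Real.sq_sqrt hgO.le
  have hsq2 : s2 ^ 2 = (s ^ 2 - ‖A2‖ ^ 2) := Real.sq_sqrt hg2.le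
  have hsq3 : s3 ^ 2 = (s ^ 2 - ‖A3‖ ^ 2) := Real.sq_sqrt hg3.le
  have hsOp : 0 < sO := Real.sqrt_pos.mpr hgO
  have hs2p : 0 < s2 := Real.sqrt_pos.mpr hg2
  have hs3p : 0 < s3 := Real.sqrt_pos.mpr hg3
  have hsep : 0 < se := Real.sqrt_pos.mpr heR
  -- sqrt of circle identities
  have hem2 : se * (s ^ 2 - ⟪O, A2⟫) = s * (sO * s2) := by
    apply sqrt_cancel (by positivity) (by positivity)
    rw [mul_pow, mul_pow, mul_pow, hsqe, hsqO, hsq2]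
    linear_combination HO2
  have hem3 : se * (s ^ 2 - ⟪O, A3⟫) = s * (sO * s3) := by
    apply sqrt_cancel (by positivity) (by positivity)
    rw [mul_pow, mul_pow, mul_pow, hsqe, hsqO, hsq3]
    linear_combination HO3
  have hdm : (se * ((s ^ 2 - ⟪O, A2⟫) - (s ^ 2 - ⟪O, A3⟫))) = (s * sO * (s2 - s3)) := by linear_combination hem2 - hem3
  have hdm2 : (s ^ 2 - R ^ 2) * (⟪O, A3⟫ - ⟪O, A2⟫) ^ 2
      = s ^ 2 * (s ^ 2 - ‖O‖ ^ 2) * ((s ^ 2 - ‖A2‖ ^ 2) + (s ^ 2 - ‖A3‖ ^ 2) - 2 * (s2 * s3)) := by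
    linear_combination ((se * ((s ^ 2 - ⟪O, A2⟫) - (s ^ 2 - ⟪O, A3⟫))) + (s * sO * (s2 - s3))) * hdm + (-(⟪O, A2⟫ - ⟪O, A3⟫) ^ 2) * hsqe
      + (s ^ 2 * (s2 - s3) ^ 2) * hsqO + (s ^ 2 * (s ^ 2 - ‖O‖ ^ 2)) * hsq2 + (s ^ 2 * (s ^ 2 - ‖O‖ ^ 2)) * hsq3
  -- c = t * a
  have hct' : (1 - t) * (((s ^ 2 - R ^ 2) * (s ^ 2 - ⟪O, P⟫) ^ 2 - s ^ 2 * (s ^ 2 - ‖O‖ ^ 2) * (s ^ 2 - ‖P‖ ^ 2)) - t * ((s ^ 2 - R ^ 2) * (⟪O, A3⟫ - ⟪O, P⟫) ^ 2 + s ^ 2 * (s ^ 2 - ‖O‖ ^ 2) * (‖A3‖ ^ 2 - 2 * ⟪P, A3⟫ + ‖P‖ ^ 2))) = 0 := by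
    linear_combination HO2 - t * HO3
      + ((s ^ 2 - R ^ 2) * ((s ^ 2 - ⟪O, A2⟫) + (s ^ 2 - ⟪O, P⟫) - t * (⟪O, A3⟫ - ⟪O, P⟫))) * h1
      - (s ^ 2 * (s ^ 2 - ‖O‖ ^ 2)) * h4
  have hct : ((s ^ 2 - R ^ 2) * (s ^ 2 - ⟪O, P⟫) ^ 2 - s ^ 2 * (s ^ 2 - ‖O‖ ^ 2) * (s ^ 2 - ‖P‖ ^ 2)) = t * ((s ^ 2 - R ^ 2) * (⟪O, A3⟫ - ⟪O, P⟫) ^ 2 + s ^ 2 * (s ^ 2 - ‖O‖ ^ 2) * (‖A3‖ ^ 2 - 2 * ⟪P, A3⟫ + ‖P‖ ^ 2)) := by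
    have h1t : (1:ℝ) - t ≠ 0 := by linarith
    have h0 := (mul_eq_zero.mp hct').resolve_left h1t
    linear_combination h0
  -- KI
  have hKI : ((s ^ 2 - R ^ 2) * (⟪O, A3⟫ - ⟪O, P⟫) ^ 2 + s ^ 2 * (s ^ 2 - ‖O‖ ^ 2) * (‖A3‖ ^ 2 - 2 * ⟪P, A3⟫ + ‖P‖ ^ 2)) * (1 - t) ^ 2 = 2 * s ^ 2 * (s ^ 2 - ‖O‖ ^ 2) * ((s ^ 2 - ⟪A2, A3⟫) - (s2 * s3)) := by
    linear_combination hdm2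
      + ((s ^ 2 - R ^ 2) * (2 * ⟪O, A3⟫ - ⟪O, A2⟫ - ⟪O, P⟫ - t * (⟪O, A3⟫ - ⟪O, P⟫))) * h1
      + (2 * s ^ 2 * (s ^ 2 - ‖O‖ ^ 2)) * h3 - (s ^ 2 * (s ^ 2 - ‖O‖ ^ 2)) * h4
  -- e1'
  have he1 : ((s ^ 2 - R ^ 2) * (⟪O, A3⟫ - ⟪O, P⟫) ^ 2 + s ^ 2 * (s ^ 2 - ‖O‖ ^ 2) * (‖A3‖ ^ 2 - 2 * ⟪P, A3⟫ + ‖P‖ ^ 2)) * (1 - t) = (2 * s ^ 2 * (s ^ 2 - ‖O‖ ^ 2) * (s ^ 2 - ⟪P, A3⟫) - 2 * (s ^ 2 - R ^ 2) * (s ^ 2 - ⟪O, P⟫) * (s ^ 2 - ⟪O, A3⟫)) := by linear_combination HO3 + hct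
  -- star-star
  have hss : 4 * s ^ 4 * (s ^ 2 - ‖O‖ ^ 2) ^ 2 * ((s ^ 2 - ⟪P, A3⟫) ^ 2 - (s ^ 2 - ‖P‖ ^ 2) * (s ^ 2 - ‖A3‖ ^ 2)) - 4 * s ^ 2 * (s ^ 2 - ‖O‖ ^ 2) * (s ^ 2 - ⟪A2, A3⟫) * ((s ^ 2 - R ^ 2) * (⟪O, A3⟫ - ⟪O, P⟫) ^ 2 + s ^ 2 * (s ^ 2 - ‖O‖ ^ 2) * (‖A3‖ ^ 2 - 2 * ⟪P, A3⟫ + ‖P‖ ^ 2))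
      + ((s ^ 2 - R ^ 2) * (⟪O, A3⟫ - ⟪O, P⟫) ^ 2 + s ^ 2 * (s ^ 2 - ‖O‖ ^ 2) * (‖A3‖ ^ 2 - 2 * ⟪P, A3⟫ + ‖P‖ ^ 2)) ^ 2 * (1 - t) ^ 2 = 0 := by
    linear_combination (((s ^ 2 - R ^ 2) * (⟪O, A3⟫ - ⟪O, P⟫) ^ 2 + s ^ 2 * (s ^ 2 - ‖O‖ ^ 2) * (‖A3‖ ^ 2 - 2 * ⟪P, A3⟫ + ‖P‖ ^ 2)) * (1 - t) + (2 * s ^ 2 * (s ^ 2 - ‖O‖ ^ 2) * (s ^ 2 - ⟪P, A3⟫) - 2 * (s ^ 2 - R ^ 2) * (s ^ 2 - ⟪O, P⟫) * (s ^ 2 - ⟪O, A3⟫))) * he1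
      - (4 * s ^ 2 * (s ^ 2 - ‖O‖ ^ 2) * ((s ^ 2 - ⟪P, A3⟫) - (s ^ 2 - ‖A3‖ ^ 2))) * hct
      + (4 * (s ^ 2 - R ^ 2) * (s ^ 2 - ⟪O, P⟫) ^ 2 - 4 * s ^ 2 * (s ^ 2 - ‖O‖ ^ 2) * (s ^ 2 - ⟪P, A3⟫)) * HO3
      + (4 * s ^ 2 * (s ^ 2 - ‖O‖ ^ 2) * ((s ^ 2 - R ^ 2) * (⟪O, A3⟫ - ⟪O, P⟫) ^ 2 + s ^ 2 * (s ^ 2 - ‖O‖ ^ 2) * (‖A3‖ ^ 2 - 2 * ⟪P, A3⟫ + ‖P‖ ^ 2))) * h3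
  -- main secant relation
  have hmain' : (2 * s ^ 2 * (s ^ 2 - ‖O‖ ^ 2)) * (((s ^ 2 - R ^ 2) * (⟪O, A3⟫ - ⟪O, P⟫) ^ 2 + s ^ 2 * (s ^ 2 - ‖O‖ ^ 2) * (‖A3‖ ^ 2 - 2 * ⟪P, A3⟫ + ‖P‖ ^ 2)) * ((s ^ 2 - ⟪A2, A3⟫) + (s2 * s3)) - 2 * s ^ 2 * (s ^ 2 - ‖O‖ ^ 2) * ((s ^ 2 - ⟪P, A3⟫) ^ 2 - (s ^ 2 - ‖P‖ ^ 2) * (s ^ 2 - ‖A3‖ ^ 2))) = 0 := by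
    linear_combination ((s ^ 2 - R ^ 2) * (⟪O, A3⟫ - ⟪O, P⟫) ^ 2 + s ^ 2 * (s ^ 2 - ‖O‖ ^ 2) * (‖A3‖ ^ 2 - 2 * ⟪P, A3⟫ + ‖P‖ ^ 2)) * hKI - hss
  have hmain : ((s ^ 2 - R ^ 2) * (⟪O, A3⟫ - ⟪O, P⟫) ^ 2 + s ^ 2 * (s ^ 2 - ‖O‖ ^ 2) * (‖A3‖ ^ 2 - 2 * ⟪P, A3⟫ + ‖P‖ ^ 2)) * ((s ^ 2 - ⟪A2, A3⟫) + (s2 * s3)) = 2 * s ^ 2 * (s ^ 2 - ‖O‖ ^ 2) * ((s ^ 2 - ⟪P, A3⟫) ^ 2 - (s ^ 2 - ‖P‖ ^ 2) * (s ^ 2 - ‖A3‖ ^ 2)) := by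
    have hne : (2 * s ^ 2 * (s ^ 2 - ‖O‖ ^ 2)) ≠ 0 := by positivity
    have h0 := (mul_eq_zero.mp hmain').resolve_left hne
    linear_combination h0
  -- tangent power
  have hN1' : (s ^ 2 - ⟪O, A1⟫) ^ 2 * (s ^ 2 * (s ^ 2 - ‖O‖ ^ 2) * ((s ^ 2 - ⟪P, A1⟫) ^ 2 - (s ^ 2 - ‖P‖ ^ 2) * (s ^ 2 - ‖A1‖ ^ 2))) = (s ^ 2 - ⟪O, A1⟫) ^ 2 * (((s ^ 2 - R ^ 2) * (s ^ 2 - ⟪O, P⟫) ^ 2 - s ^ 2 * (s ^ 2 - ‖O‖ ^ 2) * (s ^ 2 - ‖P‖ ^ 2)) * (s ^ 2 - ‖A1‖ ^ 2)) := by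
    linear_combination (s ^ 2 * (s ^ 2 - ‖O‖ ^ 2) * ((s ^ 2 - ⟪P, A1⟫) * (s ^ 2 - ⟪O, A1⟫) + (s ^ 2 - ⟪O, P⟫) * (s ^ 2 - ‖A1‖ ^ 2))) * HT
      - ((s ^ 2 - ⟪O, P⟫) ^ 2 * (s ^ 2 - ‖A1‖ ^ 2)) * HO1
  have hN1 : s ^ 2 * (s ^ 2 - ‖O‖ ^ 2) * ((s ^ 2 - ⟪P, A1⟫) ^ 2 - (s ^ 2 - ‖P‖ ^ 2) * (s ^ 2 - ‖A1‖ ^ 2)) = ((s ^ 2 - R ^ 2) * (s ^ 2 - ⟪O, P⟫) ^ 2 - s ^ 2 * (s ^ 2 - ‖O‖ ^ 2) * (s ^ 2 - ‖P‖ ^ 2)) * (s ^ 2 - ‖A1‖ ^ 2) :=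
    mul_left_cancel₀ (pow_ne_zero 2 hm1.ne') hN1'
  -- N2 = t^2 N3
  have hN2t : ((s ^ 2 - ⟪P, A2⟫) ^ 2 - (s ^ 2 - ‖P‖ ^ 2) * (s ^ 2 - ‖A2‖ ^ 2)) = t ^ 2 * ((s ^ 2 - ⟪P, A3⟫) ^ 2 - (s ^ 2 - ‖P‖ ^ 2) * (s ^ 2 - ‖A3‖ ^ 2)) := by
    linear_combination (-((s ^ 2 - ⟪P, A2⟫) + (s ^ 2 - ‖P‖ ^ 2) - t * (⟪P, A3⟫ - ‖P‖ ^ 2))) * h2 + (s ^ 2 - ‖P‖ ^ 2) * h4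
  -- combine
  have hfin' : (s ^ 2 - ‖O‖ ^ 2) * (s ^ 2 * ((s ^ 2 - ⟪P, A1⟫) ^ 2 - (s ^ 2 - ‖P‖ ^ 2) * (s ^ 2 - ‖A1‖ ^ 2)) * ((s ^ 2 - ⟪A2, A3⟫) + (s2 * s3))) = (s ^ 2 - ‖O‖ ^ 2) * (2 * s ^ 2 * t * ((s ^ 2 - ⟪P, A3⟫) ^ 2 - (s ^ 2 - ‖P‖ ^ 2) * (s ^ 2 - ‖A3‖ ^ 2)) * (s ^ 2 - ‖A1‖ ^ 2)) := by
    linear_combination ((s ^ 2 - ⟪A2, A3⟫) + (s2 * s3)) * hN1 + (s ^ 2 - ‖A1‖ ^ 2) * ((s ^ 2 - ⟪A2, A3⟫) + (s2 * s3)) * hct + (s ^ 2 - ‖A1‖ ^ 2) * t * hmain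
  have hfin : s ^ 2 * ((s ^ 2 - ⟪P, A1⟫) ^ 2 - (s ^ 2 - ‖P‖ ^ 2) * (s ^ 2 - ‖A1‖ ^ 2)) * ((s ^ 2 - ⟪A2, A3⟫) + (s2 * s3)) = 2 * s ^ 2 * t * ((s ^ 2 - ⟪P, A3⟫) ^ 2 - (s ^ 2 - ‖P‖ ^ 2) * (s ^ 2 - ‖A3‖ ^ 2)) * (s ^ 2 - ‖A1‖ ^ 2) :=
    mul_left_cancel₀ hgO.ne' hfin'
  -- gammaR computations
  have hLHS : (gammaR s d1) ^ 2 * d1 ^ 2 = s ^ 2 * ((s ^ 2 - ⟪P, A1⟫) ^ 2 - (s ^ 2 - ‖P‖ ^ 2) * (s ^ 2 - ‖A1‖ ^ 2)) / ((s ^ 2 - ‖P‖ ^ 2) * (s ^ 2 - ‖A1‖ ^ 2)) :=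
    gamma_sq_mul hs hgP hg1 hk1 HP1
  have hq2 : (gammaR s d2 * d2) ^ 2 = s ^ 2 * ((s ^ 2 - ⟪P, A2⟫) ^ 2 - (s ^ 2 - ‖P‖ ^ 2) * (s ^ 2 - ‖A2‖ ^ 2)) / ((s ^ 2 - ‖P‖ ^ 2) * (s ^ 2 - ‖A2‖ ^ 2)) := by
    rw [mul_pow]; exact gamma_sq_mul hs hgP hg2 hk2p HP2
  have hq3 : (gammaR s d3 * d3) ^ 2 = s ^ 2 * ((s ^ 2 - ⟪P, A3⟫) ^ 2 - (s ^ 2 - ‖P‖ ^ 2) * (s ^ 2 - ‖A3‖ ^ 2)) / ((s ^ 2 - ‖P‖ ^ 2) * (s ^ 2 - ‖A3‖ ^ 2)) := by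
    rw [mul_pow]; exact gamma_sq_mul hs hgP hg3 hkp HP3
  have hq23 : gammaR s d2 * d2 * (gammaR s d3 * d3) = s ^ 2 * t * ((s ^ 2 - ⟪P, A3⟫) ^ 2 - (s ^ 2 - ‖P‖ ^ 2) * (s ^ 2 - ‖A3‖ ^ 2)) / ((s ^ 2 - ‖P‖ ^ 2) * (s2 * s3)) := by
    apply sqrt_cancel
    · exact mul_nonneg
        (mul_nonneg (gammaR_nonneg _ _) (by rw [hd2]; exact norm_nonneg _))
        (mul_nonneg (gammaR_nonneg _ _) (by rw [hd3]; exact norm_nonneg _))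
    · apply div_nonneg (by positivity) (by positivity)
    rw [mul_pow, hq2, hq3, div_pow, mul_pow (s ^ 2 - ‖P‖ ^ 2) (s2 * s3), mul_pow s2 s3, hsq2, hsq3]
    rw [hN2t]
    field_simp
  have hg23 : gammaR s d23 = (s ^ 2 - ⟪A2, A3⟫) / (s2 * s3) :=
    gammaR_eq_div hs hg2 hg3 hBp (by rw [mul_pow, hsq2, hsq3]) (by positivity) H23
  rw [hLHS, hg23, mul_assoc, hq23]
  have hWne : (s2 * s3) ≠ 0 := (mul_pos hs2p hs3p).ne'
  have hBW : (s ^ 2 - ⟪A2, A3⟫) / (s2 * s3) + 1 = ((s ^ 2 - ⟪A2, A3⟫) + (s2 * s3)) / (s2 * s3) := by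
    rw [add_div, div_self hWne]
  rw [hBW, div_div_eq_mul_div, div_mul_div_comm]
  rw [div_eq_div_iff (mul_pos hgP hg1).ne'
    (mul_pos (add_pos hBp (mul_pos hs2p hs3p)) (mul_pos hgP (mul_pos hs2p hs3p))).ne']
  linear_combination (((s ^ 2 - ‖P‖ ^ 2)) * (s2 * s3)) * hfin
end

section
/- (Intersecting Gyrosecants Theorem.) Let O ∈ 𝔹, 0 < R < s, and let A2, A3, B2, B3 ∈ 𝔹 satisfy |OA2| = |OA3| = |OB2| = |OB3| = R with A2 ≠ A3 and B2 ≠ B3. Let P ∈ 𝔹 be a point such that A2 lies strictly between P and A3 on the Euclidean segment from P to A3, and B2 lies strictly between P and B3 on the Euclidean segment from P to B3. Then γ_{|PA2|}·|PA2| · γ_{|PA3|}·|PA3| / (γ_{|A2A3|} + 1) = γ_{|PB2|}·|PB2| · γ_{|PB3|}·|PB3| / (γ_{|B2B3|} + 1). -/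
open RealInnerProductSpace

lemma inner_lt {n : ℕ} {s : ℝ} (hs : 0 < s) {u v : EuclideanSpace ℝ (Fin n)}
    (hu : ‖u‖ < s) (hv : ‖v‖ < s) : |⟪u, v⟫| < s ^ 2 := by
  calc |⟪u, v⟫| ≤ ‖u‖ * ‖v‖ := abs_real_inner_le_norm u v
  _ < s * s := by
      have h0 : (0:ℝ) ≤ ‖u‖ := norm_nonneg _
      have h1 : (0:ℝ) ≤ ‖v‖ := norm_nonneg _
      nlinarith
  _ = s ^ 2 := by ring

lemma one_sub_inner_pos {n : ℕ} {s : ℝ} (hs : 0 < s) {u v : EuclideanSpace ℝ (Fin n)}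
    (hu : ‖u‖ < s) (hv : ‖v‖ < s) : 0 < 1 - ⟪u, v⟫ / s ^ 2 := by
  have hs2 : (0:ℝ) < s ^ 2 := by positivity
  have := (abs_lt.mp (inner_lt hs hu hv)).2
  rw [sub_pos, div_lt_one hs2]; exact this

lemma q_pos {n : ℕ} {s : ℝ} (hs : 0 < s) {u : EuclideanSpace ℝ (Fin n)}
    (hu : ‖u‖ < s) : 0 < 1 - ‖u‖ ^ 2 / s ^ 2 := by
  have hs2 : (0:ℝ) < s ^ 2 := by positivity
  rw [sub_pos, div_lt_one hs2]
  nlinarith [norm_nonneg u]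

lemma norm_combo {n : ℕ} (a b : ℝ) (x y : EuclideanSpace ℝ (Fin n)) :
    ‖a • x + b • y‖ ^ 2 = a ^ 2 * ‖x‖ ^ 2 + 2 * (a * b) * ⟪x, y⟫ + b ^ 2 * ‖y‖ ^ 2 := by
  rw [← real_inner_self_eq_norm_sq, ← real_inner_self_eq_norm_sq, ← real_inner_self_eq_norm_sq]
  rw [inner_add_left, inner_add_right, inner_add_right, real_inner_smul_left,
    real_inner_smul_left, real_inner_smul_left, real_inner_smul_left,
    real_inner_smul_right, real_inner_smul_right, real_inner_smul_right, real_inner_smul_right,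
    real_inner_comm y x]
  ring

lemma norm_sub_sq' {n : ℕ} (x y : EuclideanSpace ℝ (Fin n)) :
    ‖x - y‖ ^ 2 = ‖x‖ ^ 2 - 2 * ⟪x, y⟫ + ‖y‖ ^ 2 := by
  rw [← real_inner_self_eq_norm_sq, ← real_inner_self_eq_norm_sq, ← real_inner_self_eq_norm_sq]
  rw [inner_sub_left, inner_sub_right, inner_sub_right, real_inner_comm y x]
  ring

lemma norm_add_sq' {n : ℕ} (x y : EuclideanSpace ℝ (Fin n)) :
    ‖x + y‖ ^ 2 = ‖x‖ ^ 2 + 2 * ⟪x, y⟫ + ‖y‖ ^ 2 := by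
  rw [← real_inner_self_eq_norm_sq, ← real_inner_self_eq_norm_sq, ← real_inner_self_eq_norm_sq]
  rw [inner_add_left, inner_add_right, inner_add_right, real_inner_comm y x]
  ring

set_option maxHeartbeats 1000000 in
lemma key_norm {n : ℕ} {s : ℝ} (hs : 0 < s) {u v : EuclideanSpace ℝ (Fin n)}
    (hu : ‖u‖ < s) (hv : ‖v‖ < s) :
    ‖eadd s (-u) v‖ ^ 2 * (1 - ⟪u, v⟫ / s ^ 2) ^ 2 =
      ‖u - v‖ ^ 2 - (‖u‖ ^ 2 * ‖v‖ ^ 2 - ⟪u, v⟫ ^ 2) / s ^ 2 := by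
  have hs2 : (0:ℝ) < s ^ 2 := by positivity
  have hq : (0:ℝ) < 1 - ‖u‖ ^ 2 / s ^ 2 := q_pos hs hu
  set c : ℝ := Real.sqrt (1 - ‖u‖ ^ 2 / s ^ 2) with hc
  have hcpos : 0 < c := Real.sqrt_pos.mpr hq
  have hc2 : c ^ 2 = 1 - ‖u‖ ^ 2 / s ^ 2 := Real.sq_sqrt hq.le
  have hm1 : (0:ℝ) < 1 - ⟪u, v⟫ / s ^ 2 := one_sub_inner_pos hs hu hv
  have hgu : egamma s (-u) = 1 / c := by rw [egamma, norm_neg]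
  have he : eadd s (-u) v =
      (1 / (1 - ⟪u, v⟫ / s ^ 2)) • ((⟪u, v⟫ / s ^ 2 / (c + 1) - 1) • u + c • v) := by
    rw [eadd, hgu, inner_neg_left]
    match_scalars
    · field_simp
      ring
    · field_simp
      ring
  have hcne : c + 1 ≠ 0 := by positivity
  have hu2 : ‖u‖ ^ 2 = s ^ 2 * (1 - c ^ 2) := by rw [hc2]; field_simp; ring
  rw [he, norm_smul, mul_pow, norm_combo, norm_sub_sq', Real.norm_eq_abs, sq_abs, hu2]
  obtain ⟨m, hm'⟩ : ∃ m, ⟪u, v⟫ = m := ⟨_, rfl⟩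
  rw [hm'] at hm1 ⊢
  have hm1' : 1 - m / s ^ 2 ≠ 0 := ne_of_gt hm1
  have hred : ∀ X : ℝ, (1 / (1 - m / s ^ 2)) ^ 2 * X * (1 - m / s ^ 2) ^ 2 = X := by
    intro X
    have h2 : (1 / (1 - m / s ^ 2)) ^ 2 * X * (1 - m / s ^ 2) ^ 2
        = X * ((1 - m / s ^ 2) ^ 2 * ((1 - m / s ^ 2) ^ 2)⁻¹) := by
      rw [one_div, inv_pow]; ring
    rw [h2, mul_inv_cancel₀ (pow_ne_zero 2 hm1'), mul_one]
  rw [hred]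
  have hsne : s ≠ 0 := ne_of_gt hs
  field_simp
  ring

lemma key_one_sub {n : ℕ} {s : ℝ} (hs : 0 < s) {u v : EuclideanSpace ℝ (Fin n)}
    (hu : ‖u‖ < s) (hv : ‖v‖ < s) :
    1 - ‖eadd s (-u) v‖ ^ 2 / s ^ 2 =
      ((1 - ‖u‖ ^ 2 / s ^ 2) * (1 - ‖v‖ ^ 2 / s ^ 2)) / (1 - ⟪u, v⟫ / s ^ 2) ^ 2 := by
  have hs2 : (0:ℝ) < s ^ 2 := by positivity
  have hm1 : (0:ℝ) < 1 - ⟪u, v⟫ / s ^ 2 := one_sub_inner_pos hs hu hv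
  have hk := key_norm hs hu hv
  rw [norm_sub_sq'] at hk
  rw [eq_div_iff (pow_ne_zero 2 (ne_of_gt hm1))]
  linear_combination (-(1:ℝ)/s^2) * hk

lemma key_gamma {n : ℕ} {s : ℝ} (hs : 0 < s) {u v : EuclideanSpace ℝ (Fin n)}
    (hu : ‖u‖ < s) (hv : ‖v‖ < s) :
    gammaR s ‖eadd s (-u) v‖ =
      (1 - ⟪u, v⟫ / s ^ 2) /
        Real.sqrt ((1 - ‖u‖ ^ 2 / s ^ 2) * (1 - ‖v‖ ^ 2 / s ^ 2)) := by
  have hm1 : (0:ℝ) < 1 - ⟪u, v⟫ / s ^ 2 := one_sub_inner_pos hs hu hv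
  have hQ : (0:ℝ) < (1 - ‖u‖ ^ 2 / s ^ 2) * (1 - ‖v‖ ^ 2 / s ^ 2) :=
    mul_pos (q_pos hs hu) (q_pos hs hv)
  rw [gammaR, key_one_sub hs hu hv, Real.sqrt_div hQ.le, Real.sqrt_sq hm1.le, one_div_div]

lemma key_gd {n : ℕ} {s : ℝ} (hs : 0 < s) {u v : EuclideanSpace ℝ (Fin n)}
    (hu : ‖u‖ < s) (hv : ‖v‖ < s) :
    gammaR s ‖eadd s (-u) v‖ * ‖eadd s (-u) v‖ =
      Real.sqrt (‖u - v‖ ^ 2 - (‖u‖ ^ 2 * ‖v‖ ^ 2 - ⟪u, v⟫ ^ 2) / s ^ 2) /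
        Real.sqrt ((1 - ‖u‖ ^ 2 / s ^ 2) * (1 - ‖v‖ ^ 2 / s ^ 2)) := by
  have hm1 : (0:ℝ) < 1 - ⟪u, v⟫ / s ^ 2 := one_sub_inner_pos hs hu hv
  have hk := key_norm hs hu hv
  have hM : ‖u - v‖ ^ 2 - (‖u‖ ^ 2 * ‖v‖ ^ 2 - ⟪u, v⟫ ^ 2) / s ^ 2
      = ((1 - ⟪u, v⟫ / s ^ 2) * ‖eadd s (-u) v‖) ^ 2 := by
    rw [← hk]; ring
  rw [key_gamma hs hu hv, hM, Real.sqrt_sq (by positivity)]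
  ring

set_option maxHeartbeats 4000000 in
lemma secant_side {n : ℕ} {s : ℝ} (hs : 0 < s) {O P A2 A3 : EuclideanSpace ℝ (Fin n)}
    (hO : ‖O‖ < s) (hP : ‖P‖ < s) (hA2 : ‖A2‖ < s) (hA3 : ‖A3‖ < s)
    {R : ℝ} (hRs : R < s)
    (hRA2 : ‖eadd s (-O) A2‖ = R) (hRA3 : ‖eadd s (-O) A3‖ = R)
    (hbtw : Sbtw ℝ P A2 A3) :
    gammaR s ‖eadd s (-P) A2‖ * ‖eadd s (-P) A2‖ *
        (gammaR s ‖eadd s (-P) A3‖ * ‖eadd s (-P) A3‖) /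
      (gammaR s ‖eadd s (-A2) A3‖ + 1) =
    s ^ 2 * ((1 - R ^ 2 / s ^ 2) * (1 - ⟪O, P⟫ / s ^ 2) ^ 2 -
        (1 - ‖O‖ ^ 2 / s ^ 2) * (1 - ‖P‖ ^ 2 / s ^ 2)) /
      (2 * ((1 - ‖O‖ ^ 2 / s ^ 2) * (1 - ‖P‖ ^ 2 / s ^ 2))) := by
  have hs2 : (0:ℝ) < s ^ 2 := by positivity
  have hsne : s ≠ 0 := ne_of_gt hs
  -- betweenness gives t > 1 with A3 = P + t • (A2 - P)
  obtain ⟨⟨r, hr, hmap⟩, h1, h2⟩ := hbtw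
  have hr0 : r ≠ 0 := by
    intro h; apply h1; rw [← hmap, h]; simp
  have hr1 : r ≠ 1 := by
    intro h; apply h2; rw [← hmap, h]; simp
  have hrpos : 0 < r := lt_of_le_of_ne hr.1 (Ne.symm hr0)
  have hrlt : r < 1 := lt_of_le_of_ne hr.2 hr1
  set a : EuclideanSpace ℝ (Fin n) := A2 - P with ha
  set t : ℝ := r⁻¹ with htdef
  have ht1 : 1 < t := one_lt_inv_iff₀.mpr ⟨hrpos, hrlt⟩
  have hA2eq : A2 = P + a := by rw [ha]; abel
  have hA3eq : A3 = P + t • a := by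
    have haeq : a = r • (A3 - P) := by
      rw [ha, ← hmap]; simp [AffineMap.lineMap_apply]
    rw [htdef, haeq, smul_smul, inv_mul_cancel₀ hr0, one_smul]; abel
  clear_value a t
  -- scalar abbreviations
  set x : ℝ := ⟪P, a⟫ / s ^ 2 with hx0
  set y : ℝ := ‖a‖ ^ 2 / s ^ 2 with hy0
  set z : ℝ := ⟪O, a⟫ / s ^ 2 with hz0
  set p : ℝ := 1 - ⟪O, P⟫ / s ^ 2 with hp0
  set qO : ℝ := 1 - ‖O‖ ^ 2 / s ^ 2 with hqO0
  set qP : ℝ := 1 - ‖P‖ ^ 2 / s ^ 2 with hqP0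
  set K : ℝ := 1 - R ^ 2 / s ^ 2 with hK0
  clear_value x y z p qO qP K
  have hqOpos : 0 < qO := by rw [hqO0]; exact q_pos hs hO
  have hqPpos : 0 < qP := by rw [hqP0]; exact q_pos hs hP
  have hqA2pos : 0 < 1 - ‖A2‖ ^ 2 / s ^ 2 := q_pos hs hA2
  have hqA3pos : 0 < 1 - ‖A3‖ ^ 2 / s ^ 2 := q_pos hs hA3
  -- inner product expansions
  have hiOA2 : ⟪O, A2⟫ = ⟪O, P⟫ + ⟪O, a⟫ := by rw [hA2eq, inner_add_right]
  have hiOA3 : ⟪O, A3⟫ = ⟪O, P⟫ + t * ⟪O, a⟫ := by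
    rw [hA3eq, inner_add_right, real_inner_smul_right]
  have hiPA2 : ⟪P, A2⟫ = ⟪P, P⟫ + ⟪P, a⟫ := by rw [hA2eq, inner_add_right]
  have hiPA3 : ⟪P, A3⟫ = ⟪P, P⟫ + t * ⟪P, a⟫ := by
    rw [hA3eq, inner_add_right, real_inner_smul_right]
  have hPP : ⟪P, P⟫ = ‖P‖ ^ 2 := real_inner_self_eq_norm_sq P
  have hnA2 : ‖A2‖ ^ 2 = ‖P‖ ^ 2 + 2 * ⟪P, a⟫ + ‖a‖ ^ 2 := by rw [hA2eq, norm_add_sq']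
  have hnA3 : ‖A3‖ ^ 2 = ‖P‖ ^ 2 + 2 * (t * ⟪P, a⟫) + t ^ 2 * ‖a‖ ^ 2 := by
    rw [hA3eq, norm_add_sq', real_inner_smul_right, norm_smul, mul_pow, Real.norm_eq_abs,
      sq_abs]
  have hiA23 : ⟪A2, A3⟫ = ‖P‖ ^ 2 + (1 + t) * ⟪P, a⟫ + t * ‖a‖ ^ 2 := by
    rw [hA2eq, hA3eq, inner_add_right, inner_add_left, inner_add_left, real_inner_smul_right,
      real_inner_smul_right, real_inner_comm a P, hPP, real_inner_self_eq_norm_sq a]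
    ring
  have hPmA2 : P - A2 = -a := by rw [ha]; abel
  have hPmA3 : P - A3 = -(t • a) := by rw [hA3eq]; abel
  have hA2mA3 : A2 - A3 = -((t - 1) • a) := by
    rw [hA2eq, hA3eq, sub_smul, one_smul]; abel
  -- positivity of 1 - R^2/s^2
  have hR0 : 0 ≤ R := hRA2 ▸ norm_nonneg _
  have hKpos : 0 < K := by
    rw [hK0, sub_pos, div_lt_one hs2]; nlinarith
  -- fold lemmas
  have ha2eq : 1 - ⟪O, A2⟫ / s ^ 2 = p - z := by
    rw [hiOA2, hp0, hz0]; ring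
  have ha3eq : 1 - ⟪O, A3⟫ / s ^ 2 = p - t * z := by
    rw [hiOA3, hp0, hz0]; ring
  have foldA2 : 1 - ‖A2‖ ^ 2 / s ^ 2 = qP - 2 * x - y := by
    rw [hnA2, hqP0, hx0, hy0]; ring
  have foldA3 : 1 - ‖A3‖ ^ 2 / s ^ 2 = qP - 2 * t * x - t ^ 2 * y := by
    rw [hnA3, hqP0, hx0, hy0]; ring
  have foldm23 : 1 - ⟪A2, A3⟫ / s ^ 2 = qP - (1 + t) * x - t * y := by
    rw [hiA23, hqP0, hx0, hy0]; ring
  have foldM2 : ‖P - A2‖ ^ 2 - (‖P‖ ^ 2 * ‖A2‖ ^ 2 - ⟪P, A2⟫ ^ 2) / s ^ 2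
      = s ^ 2 * (x ^ 2 + qP * y) := by
    rw [hPmA2, norm_neg, hnA2, hiPA2, hPP, hqP0, hx0, hy0]
    field_simp
    ring
  have foldM3 : ‖P - A3‖ ^ 2 - (‖P‖ ^ 2 * ‖A3‖ ^ 2 - ⟪P, A3⟫ ^ 2) / s ^ 2
      = s ^ 2 * (t ^ 2 * (x ^ 2 + qP * y)) := by
    rw [hPmA3, norm_neg, norm_smul, mul_pow, Real.norm_eq_abs, sq_abs, hnA3, hiPA3, hPP,
      hqP0, hx0, hy0]
    field_simp
    ring
  -- positivity of scalar quantities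
  have hq2pos : 0 < qP - 2 * x - y := foldA2 ▸ hqA2pos
  have hq3pos : 0 < qP - 2 * t * x - t ^ 2 * y := foldA3 ▸ hqA3pos
  have hm23pos : 0 < qP - (1 + t) * x - t * y :=
    foldm23 ▸ one_sub_inner_pos hs hA2 hA3
  have ha2pos : 0 < p - z := ha2eq ▸ one_sub_inner_pos hs hO hA2
  have ha3pos : 0 < p - t * z := ha3eq ▸ one_sub_inner_pos hs hO hA3
  have hynn : 0 ≤ y := by rw [hy0]; positivity
  have hXnn : 0 ≤ x ^ 2 + qP * y := by positivity
  have htpos : 0 < t := by linarith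
  -- circle conditions in scalar form
  have hc2' : K * (p - z) ^ 2 = qO * (qP - 2 * x - y) := by
    have h := key_one_sub hs hO hA2
    rw [hRA2] at h
    have hα : (0:ℝ) < 1 - ⟪O, A2⟫ / s ^ 2 := one_sub_inner_pos hs hO hA2
    have h2 : (1 - R ^ 2 / s ^ 2) * (1 - ⟪O, A2⟫ / s ^ 2) ^ 2
        = (1 - ‖O‖ ^ 2 / s ^ 2) * (1 - ‖A2‖ ^ 2 / s ^ 2) := by
      rw [h, div_mul_cancel₀ _ (pow_ne_zero 2 (ne_of_gt hα))]
    rw [← hK0, ha2eq, ← hqO0, foldA2] at h2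
    exact h2
  have hc3' : K * (p - t * z) ^ 2 = qO * (qP - 2 * t * x - t ^ 2 * y) := by
    have h := key_one_sub hs hO hA3
    rw [hRA3] at h
    have hα : (0:ℝ) < 1 - ⟪O, A3⟫ / s ^ 2 := one_sub_inner_pos hs hO hA3
    have h2 : (1 - R ^ 2 / s ^ 2) * (1 - ⟪O, A3⟫ / s ^ 2) ^ 2
        = (1 - ‖O‖ ^ 2 / s ^ 2) * (1 - ‖A3‖ ^ 2 / s ^ 2) := by
      rw [h, div_mul_cancel₀ _ (pow_ne_zero 2 (ne_of_gt hα))]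
    rw [← hK0, ha3eq, ← hqO0, foldA3] at h2
    exact h2
  -- square roots
  set SQ : ℝ := Real.sqrt (x ^ 2 + qP * y) with hSQ0
  set TT : ℝ := Real.sqrt qP with hTT0
  set B2 : ℝ := Real.sqrt (qP - 2 * x - y) with hB20
  set B3 : ℝ := Real.sqrt (qP - 2 * t * x - t ^ 2 * y) with hB30
  clear_value SQ TT B2 B3
  have hTTpos : 0 < TT := by rw [hTT0]; exact Real.sqrt_pos.mpr hqPpos
  have hB2pos : 0 < B2 := by rw [hB20]; exact Real.sqrt_pos.mpr hq2pos
  have hB3pos : 0 < B3 := by rw [hB30]; exact Real.sqrt_pos.mpr hq3pos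
  have hTsq : TT * TT = qP := by rw [hTT0]; exact Real.mul_self_sqrt hqPpos.le
  have hSQsq : SQ * SQ = x ^ 2 + qP * y := by rw [hSQ0]; exact Real.mul_self_sqrt hXnn
  have hB2B3 : B2 * B3 = K * (p - z) * (p - t * z) / qO := by
    rw [hB20, hB30, ← Real.sqrt_mul hq2pos.le]
    have hsq : (qP - 2 * x - y) * (qP - 2 * t * x - t ^ 2 * y)
        = (K * (p - z) * (p - t * z) / qO) ^ 2 := by
      rw [div_pow, eq_div_iff (pow_ne_zero 2 (ne_of_gt hqOpos))]
      linear_combination (- (qO * (qP - 2*t*x - t^2*y))) * hc2' + (- (K * (p - z)^2)) * hc3'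
    rw [hsq, Real.sqrt_sq (by positivity)]
  -- gamma factor computations
  have hg2full : gammaR s ‖eadd s (-P) A2‖ * ‖eadd s (-P) A2‖ = s * SQ / (TT * B2) := by
    rw [key_gd hs hP hA2, foldM2, ← hqP0, foldA2, Real.sqrt_mul (sq_nonneg s),
      Real.sqrt_sq hs.le, Real.sqrt_mul hqPpos.le, ← hSQ0, ← hTT0, ← hB20]
  have hg3full : gammaR s ‖eadd s (-P) A3‖ * ‖eadd s (-P) A3‖ = s * t * SQ / (TT * B3) := by
    rw [key_gd hs hP hA3, foldM3, ← hqP0, foldA3, Real.sqrt_mul (sq_nonneg s),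
      Real.sqrt_sq hs.le, Real.sqrt_mul (sq_nonneg t), Real.sqrt_sq htpos.le,
      Real.sqrt_mul hqPpos.le, ← hSQ0, ← hTT0, ← hB30]
    ring
  have hg23full : gammaR s ‖eadd s (-A2) A3‖
      = (qP - (1 + t) * x - t * y) / (B2 * B3) := by
    rw [key_gamma hs hA2 hA3, foldm23, foldA2, foldA3, Real.sqrt_mul hq2pos.le,
      ← hB20, ← hB30]
  -- reduce the left-hand side
  rw [hg2full, hg3full, hg23full]
  have hdenpos : 0 < (qP - (1 + t) * x - t * y) / (B2 * B3) + 1 := by positivity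
  have hred : s * SQ / (TT * B2) * (s * t * SQ / (TT * B3)) /
      ((qP - (1 + t) * x - t * y) / (B2 * B3) + 1)
      = s ^ 2 * t * (SQ * SQ) /
        ((TT * TT) * ((qP - (1 + t) * x - t * y) + B2 * B3)) := by
    have hsum : 0 < qP - (1 + t) * x - t * y + B2 * B3 := by positivity
    rw [div_add' _ _ _ (ne_of_gt (mul_pos hB2pos hB3pos)), one_mul, div_div_eq_mul_div,
      div_eq_div_iff (by positivity) (by positivity)]
    field_simp
  rw [hred, hSQsq, hTsq, hB2B3]
  -- solve the linear system for x and y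
  have htne : t ≠ 0 := ne_of_gt htpos
  have ht1ne : t - 1 ≠ 0 := by intro h; linarith [sub_eq_zero.mp h]
  have hqOne : qO ≠ 0 := ne_of_gt hqOpos
  have ht1pos : 0 < t - 1 := by linarith
  have hx : x = (t ^ 2 * (qO * qP - K * (p - z) ^ 2) - (qO * qP - K * (p - t * z) ^ 2)) /
      (2 * t * (t - 1) * qO) := by
    rw [eq_div_iff (by positivity)]
    linear_combination t ^ 2 * hc2' - hc3'
  have hy : y = (t * (qO * qP - K * (p - z) ^ 2) - (qO * qP - K * (p - t * z) ^ 2)) /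
      (t * (1 - t) * qO) := by
    have hden : t * (1 - t) * qO ≠ 0 := by
      intro h
      rcases mul_eq_zero.mp h with h' | h'
      · rcases mul_eq_zero.mp h' with h'' | h''
        · exact htne h''
        · linarith [h'']
      · exact hqOne h'
    rw [eq_div_iff hden]
    linear_combination t * hc2' - hc3'
  have hbigpos : 0 < qP - (1 + t) * x - t * y + K * (p - z) * (p - t * z) / qO :=
    add_pos hm23pos (div_pos (mul_pos (mul_pos hKpos ha2pos) ha3pos) hqOpos)
  rw [div_eq_div_iff (by positivity) (by positivity)]
  rw [hx, hy]
  have h1tne : 1 - t ≠ 0 := by intro h; linarith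
  have ht1ne' : t - 1 ≠ 0 := by intro h; linarith
  have hqPne : qP ≠ 0 := ne_of_gt hqPpos
  field_simp
  ring


/-- **Intersecting Gyrosecants Theorem.** -/
theorem intersecting_gyrosecants {n : ℕ} (hn : 2 ≤ n) (s : ℝ) (hs : 0 < s)
    (O A2 A3 B2 B3 P : EuclideanSpace ℝ (Fin n)) (hO : ‖O‖ < s)
    (R : ℝ) (hRpos : 0 < R) (hRs : R < s)
    (hA2 : ‖A2‖ < s) (hA3 : ‖A3‖ < s) (hB2 : ‖B2‖ < s) (hB3 : ‖B3‖ < s)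
    (hP : ‖P‖ < s)
    (hRA2 : ‖eadd s (-O) A2‖ = R) (hRA3 : ‖eadd s (-O) A3‖ = R)
    (hRB2 : ‖eadd s (-O) B2‖ = R) (hRB3 : ‖eadd s (-O) B3‖ = R)
    (hA : A2 ≠ A3) (hB : B2 ≠ B3)
    (hbtwA : Sbtw ℝ P A2 A3) (hbtwB : Sbtw ℝ P B2 B3)
    (dA2 dA3 dB2 dB3 dA dB : ℝ)
    (hdA2 : dA2 = ‖eadd s (-P) A2‖) (hdA3 : dA3 = ‖eadd s (-P) A3‖)
    (hdB2 : dB2 = ‖eadd s (-P) B2‖) (hdB3 : dB3 = ‖eadd s (-P) B3‖)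
    (hdA : dA = ‖eadd s (-A2) A3‖) (hdB : dB = ‖eadd s (-B2) B3‖) :
    gammaR s dA2 * dA2 * (gammaR s dA3 * dA3) / (gammaR s dA + 1) =
      gammaR s dB2 * dB2 * (gammaR s dB3 * dB3) / (gammaR s dB + 1) := by
  subst hdA2 hdA3 hdB2 hdB3 hdA hdB
  rw [secant_side hs hO hP hA2 hA3 hRs hRA2 hRA3 hbtwA,
    secant_side hs hO hP hB2 hB3 hRs hRB2 hRB3 hbtwB]
end
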